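/- arXiv:1002.4350 — 3 statements merged into one kernel-verified Lean document; each statement's English description precedes it below -/
import Mathlib

section
/- Let Γ be a connected multigraph with finite vertex set V in which every edge joining two distinct vertices is a bridge (a tree-like graph). Then Λ = Z, i.e. the degree class group Δ = Z/Λ is the trivial group. -/
open Finset

noncomputable section
open scoped Classical

variable {V : Type} [Fintype V] [DecidableEq V]

/-- The simple graph underlying a multigraph with multiplicity function `k`:
`u` and `v` are adjacent iff `u ≠ v` and some edge joins them. -/
def graphOf (k : V → V → ℕ) : SimpleGraph V where
  Adj u v := u ≠ v ∧ (0 < k u v ∨ 0 < k v u)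
  symm := ⟨fun u v h => ⟨h.1.symm, h.2.symm⟩⟩
  loopless := ⟨fun v h => h.1 rfl⟩

/-- The number of edges of a multigraph: loops plus half the ordered count. -/
def numEdges (k : V → V → ℕ) : ℕ :=
  (∑ v, k v v) + (∑ u, ∑ v ∈ Finset.univ.erase u, k u v) / 2

/-- The genus of a weighted graph: `∑ w(v) + b₁`, with `b₁ = #E - #V + 1`. -/
def genus (k : V → V → ℕ) (w : V → ℕ) : ℤ :=
  (∑ v, (w v : ℤ)) + ((numEdges k : ℤ) - (Fintype.card V : ℤ) + 1)

/-- Stability: connected, and each weight-zero vertex has valency at least 3. -/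
def IsStable (k : V → V → ℕ) (w : V → ℕ) : Prop :=
  (graphOf k).Connected ∧
    ∀ v, w v = 0 → 3 ≤ 2 * k v v + ∑ u ∈ Finset.univ.erase v, k u v

/-- `δ_A`: the number of edges joining `A` to its complement. -/
def deltaA (k : V → V → ℕ) (A : Finset V) : ℤ :=
  ∑ u ∈ A, ∑ v ∈ Aᶜ, (k u v : ℤ)

/-- `w_A = Σ_{v∈A} (2w(v) − 2 + 2k(v,v) + Σ_{u≠v} k(u,v))`. -/
def wA (k : V → V → ℕ) (w : V → ℕ) (A : Finset V) : ℤ :=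
  ∑ v ∈ A, (2 * (w v : ℤ) - 2 + 2 * (k v v : ℤ) + ∑ u ∈ Finset.univ.erase v, (k u v : ℤ))

/-- `d_A`: the total degree of a multidegree on the subset `A`. -/
def degA (d : V → ℤ) (A : Finset V) : ℤ := ∑ v ∈ A, d v

/-- `m_A(d) = d·w_A/(2g−2) − δ_A/2 ∈ ℚ`. -/
def mA (k : V → V → ℕ) (w : V → ℕ) (D : ℤ) (A : Finset V) : ℚ :=
  (D : ℚ) * (wA k w A : ℚ) / ((2 * genus k w - 2 : ℤ) : ℚ) - (deltaA k A : ℚ) / 2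

/-- A balanced multidegree of total degree `D`. -/
def IsBalanced (k : V → V → ℕ) (w : V → ℕ) (D : ℤ) (d : V → ℤ) : Prop :=
  degA d Finset.univ = D ∧ ∀ A : Finset V, mA k w D A ≤ (degA d A : ℚ)

/-- A strictly balanced multidegree of total degree `D`. -/
def IsStrictlyBalanced (k : V → V → ℕ) (w : V → ℕ) (D : ℤ) (d : V → ℤ) : Prop :=
  IsBalanced k w D d ∧
    ∀ A : Finset V, A ≠ ∅ → A ≠ Finset.univ → mA k w D A < (degA d A : ℚ)

/-- `(Γ,w)` is `d`-general if every balanced multidegree of total degree `d`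
is strictly balanced. -/
def IsDGeneral (k : V → V → ℕ) (w : V → ℕ) (D : ℤ) : Prop :=
  ∀ d : V → ℤ, IsBalanced k w D d → IsStrictlyBalanced k w D d

/-- The generator `c_v` of the lattice `Λ`. -/
def cvec (k : V → V → ℕ) (v : V) : V → ℤ := fun u =>
  if u = v then -(∑ x ∈ Finset.univ.erase v, (k x v : ℤ)) else (k u v : ℤ)

/-- The lattice `Λ ⊆ ℤ^V` generated by the `c_v`. -/
def Lambda (k : V → V → ℕ) : AddSubgroup (V → ℤ) :=
  AddSubgroup.closure (Set.range (cvec k))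

/-- The total-degree homomorphism `ℤ^V → ℤ`. -/
def sumHom (V : Type) [Fintype V] : (V → ℤ) →+ ℤ :=
  { toFun := fun d => ∑ v, d v
    map_zero' := by simp
    map_add' := fun a b => by simp [Finset.sum_add_distrib] }

/-- `Z = {d ∈ ℤ^V : Σ_v d(v) = 0}`. -/
def Zsub (V : Type) [Fintype V] : AddSubgroup (V → ℤ) := (sumHom V).ker

/-- Remove the edge(s) joining `a` and `b` from the multigraph. -/
def removeEdge (k : V → V → ℕ) (a b : V) : V → V → ℕ := fun u v =>
  if (u = a ∧ v = b) ∨ (u = b ∧ v = a) then 0 else k u v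

/-- `a`–`b` is a bridge: a single non-loop edge whose removal disconnects the graph. -/
def IsBridge (k : V → V → ℕ) (a b : V) : Prop :=
  a ≠ b ∧ k a b = 1 ∧ ¬ (graphOf (removeEdge k a b)).Connected

/-- `A` induces a connected sub-multigraph. -/
def IsConnectedSubset (k : V → V → ℕ) (A : Finset V) : Prop :=
  ((graphOf k).induce (A : Set V)).Connected

/-- The equivalence relation `≈` on `V` generated by bridges. -/
def contractSetoid (k : V → V → ℕ) : Setoid V :=
  ⟨Relation.EqvGen (fun u v => IsBridge k u v), Relation.EqvGen.is_equivalence _⟩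

/-- The vertex set `V² = V/≈` of the contracted graph `Γ²`. -/
def V2 (k : V → V → ℕ) : Type := Quotient (contractSetoid k)

instance (k : V → V → ℕ) : Finite (V2 k) := Quotient.finite _

instance (k : V → V → ℕ) : Fintype (V2 k) := Fintype.ofFinite _

/-- The fiber of the quotient map `φ : V → V²` over a class `c`. -/
def fiber (k : V → V → ℕ) (c : V2 k) : Finset V :=
  Finset.univ.filter (fun v => Quotient.mk (contractSetoid k) v = c)

/-- The multiplicity function `k²` of the contracted graph `Γ²`. -/
def k2 (k : V → V → ℕ) : V2 k → V2 k → ℕ := fun c c' =>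
  if c = c' then
    (∑ v ∈ fiber k c, k v v) +
      (∑ u ∈ fiber k c, ∑ v ∈ (fiber k c).erase u,
        if IsBridge k u v then 0 else k u v) / 2
  else ∑ u ∈ fiber k c, ∑ v ∈ fiber k c', k u v

/-- The weight function `w²` of the contracted weighted graph `(Γ²,w²)`. -/
def w2 (k : V → V → ℕ) (w : V → ℕ) : V2 k → ℕ := fun c => ∑ v ∈ fiber k c, w v

/-- The pushforward `α(d)` of a multidegree to the contracted graph. -/
def alphaMap (k : V → V → ℕ) (d : V → ℤ) : V2 k → ℤ := fun c => ∑ v ∈ fiber k c, d v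

/-- The setoid on multidegrees of total degree `D`: two are equivalent if their
difference lies in `Λ`; the quotient is `Δ^d`. -/
def degSetoid (k : V → V → ℕ) (D : ℤ) : Setoid {d : V → ℤ // (∑ v, d v) = D} :=
  ⟨fun a b => (a : V → ℤ) - (b : V → ℤ) ∈ Lambda k, by
    constructor
    · intro a; simpa using (Lambda k).zero_mem
    · intro a b h; have h2 := (Lambda k).neg_mem h; rwa [neg_sub] at h2
    · intro a b c h1 h2
      have h3 := (Lambda k).add_mem h1 h2
      rwa [sub_add_sub_cancel] at h3⟩

/-- Number of edges of the sub-multigraph induced on `A`. -/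
def numEdgesIn (k : V → V → ℕ) (A : Finset V) : ℕ :=
  (∑ v ∈ A, k v v) + (∑ u ∈ A, ∑ v ∈ A.erase u, k u v) / 2

/-- Blow-up of a multigraph at the single bridge `a`–`b`: one exceptional
vertex is inserted in the middle of the bridge. -/
def blowK (k : V → V → ℕ) (a b : V) : (V ⊕ Unit) → (V ⊕ Unit) → ℕ
  | Sum.inl u, Sum.inl v => if (u = a ∧ v = b) ∨ (u = b ∧ v = a) then 0 else k u v
  | Sum.inl u, Sum.inr _ => if u = a ∨ u = b then 1 else 0
  | Sum.inr _, Sum.inl v => if v = a ∨ v = b then 1 else 0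
  | Sum.inr _, Sum.inr _ => 0

/-- Weight function of the blow-up at one bridge: exceptional vertex has weight 0. -/
def blowW (w : V → ℕ) : V ⊕ Unit → ℕ
  | Sum.inl v => w v
  | Sum.inr _ => 0

/-- Blow-up of a multigraph at a set `S` of bridges (given as ordered pairs):
one exceptional vertex is inserted in the middle of each bridge of `S`. -/
def blowKS (k : V → V → ℕ) (S : Finset (V × V)) :
    (V ⊕ {p : V × V // p ∈ S}) → (V ⊕ {p : V × V // p ∈ S}) → ℕ
  | Sum.inl u, Sum.inl v => if (u, v) ∈ S ∨ (v, u) ∈ S then 0 else k u v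
  | Sum.inl u, Sum.inr e => if u = e.1.1 ∨ u = e.1.2 then 1 else 0
  | Sum.inr e, Sum.inl v => if v = e.1.1 ∨ v = e.1.2 then 1 else 0
  | Sum.inr _, Sum.inr _ => 0

/-- Weight function of the blow-up at a set of bridges. -/
def blowWS (w : V → ℕ) (S : Finset (V × V)) : (V ⊕ {p : V × V // p ∈ S}) → ℕ
  | Sum.inl v => w v
  | Sum.inr _ => 0

/-- Strictly balanced multidegree of total degree `D` on the blow-up `Γ̂_S`:
balanced (with degree 1 on each exceptional vertex), and the inequality is
strict for every proper nonempty `A` such that some edge between `A` and its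
complement has no exceptional endpoint. -/
def IsStrictlyBalancedBlowS (k : V → V → ℕ) (w : V → ℕ) (S : Finset (V × V)) (D : ℤ)
    (dh : (V ⊕ {p : V × V // p ∈ S}) → ℤ) : Prop :=
  IsBalanced (blowKS k S) (blowWS w S) D dh ∧
    (∀ e : {p : V × V // p ∈ S}, dh (Sum.inr e) = 1) ∧
    ∀ A : Finset (V ⊕ {p : V × V // p ∈ S}), A ≠ ∅ → A ≠ Finset.univ →
      (∃ u v : V, Sum.inl u ∈ A ∧ Sum.inl v ∉ A ∧ 0 < blowKS k S (Sum.inl u) (Sum.inl v)) →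
      mA (blowKS k S) (blowWS w S) D A < (degA dh A : ℚ)

/-- Multiplicity function of the vine graph: two vertices joined by `δ` edges,
no loops. -/
def vineK (δ : ℕ) : Fin 2 → Fin 2 → ℕ := fun u v => if u = v then 0 else δ

/-- Weight function of the vine graph with weights `g₁, g₂`. -/
def vineW (g1 g2 : ℕ) : Fin 2 → ℕ := fun v => if v = 0 then g1 else g2

/-- The data of a stable vine graph of genus `g` with weights `g₁, g₂` and `δ` edges. -/
def StableVine (g : ℤ) (g1 g2 δ : ℕ) : Prop :=
  2 ≤ δ ∧ ((g1 = 0 ∨ g2 = 0) → 3 ≤ δ) ∧ (g1 : ℤ) + (g2 : ℤ) + (δ : ℤ) - 1 = g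

lemma cvec_sum_zero (k : V → V → ℕ) (v : V) : ∑ u, cvec k v u = 0 := by
  have h1 : ∑ u ∈ Finset.univ.erase v, cvec k v u
      = ∑ u ∈ Finset.univ.erase v, (k u v : ℤ) :=
    Finset.sum_congr rfl fun u hu => by simp [cvec, (Finset.mem_erase.mp hu).1]
  rw [← Finset.add_sum_erase _ _ (Finset.mem_univ v), h1]
  simp [cvec]

lemma sum_cvec_eq (k : V → V → ℕ) (hsym : ∀ u v, k u v = k v u) (A : Finset V)
    (u v : V) (hu : u ∈ A) (hv : v ∉ A)
    (hcross : ∀ x ∈ A, ∀ y, y ∉ A → (k x y : ℤ) = if x = u ∧ y = v then 1 else 0) :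
    ∑ x ∈ A, cvec k x = Pi.single v 1 - Pi.single u 1 := by
  have huv : u ≠ v := fun h => hv (h ▸ hu)
  funext y
  rw [Finset.sum_apply, Pi.sub_apply, Pi.single_apply, Pi.single_apply]
  by_cases hyA : y ∈ A
  · have hyv : y ≠ v := fun h => hv (h ▸ hyA)
    have hsplit : Finset.univ.erase y = (A.erase y) ∪ Aᶜ := by
      ext z
      simp only [Finset.mem_erase, Finset.mem_univ, and_true, Finset.mem_union,
        Finset.mem_compl]
      constructor
      · intro hz
        by_cases hzA : z ∈ A
        · exact Or.inl ⟨hz, hzA⟩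
        · exact Or.inr hzA
      · rintro (⟨hz, _⟩ | hz)
        · exact hz
        · exact fun h => hz (h ▸ hyA)
    have hdisj : Disjoint (A.erase y) Aᶜ := by
      simp only [Finset.disjoint_left, Finset.mem_erase, Finset.mem_compl]
      exact fun z hz => not_not_intro hz.2
    have h2 : ∑ x ∈ A, cvec k x y
        = (-(∑ z ∈ Finset.univ.erase y, (k z y : ℤ)))
          + ∑ x ∈ A.erase y, (k y x : ℤ) := by
      rw [← Finset.add_sum_erase _ _ hyA]
      congr 1
      · simp [cvec]
      · exact Finset.sum_congr rfl fun x hx => by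
          simp [cvec, (Finset.mem_erase.mp hx).1.symm]
    rw [h2, hsplit, Finset.sum_union hdisj]
    have h3 : ∑ x ∈ A.erase y, (k y x : ℤ) = ∑ x ∈ A.erase y, (k x y : ℤ) :=
      Finset.sum_congr rfl fun x _ => by rw [hsym]
    have h4 : ∑ z ∈ Aᶜ, (k z y : ℤ) = if y = u then 1 else 0 := by
      have : ∀ z ∈ Aᶜ, (k z y : ℤ) = if y = u ∧ z = v then 1 else 0 := by
        intro z hz
        rw [Finset.mem_compl] at hz
        rw [hsym]
        exact hcross y hyA z hz
      rw [Finset.sum_congr rfl this]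
      by_cases hyu : y = u
      · simp only [hyu, true_and]
        rw [Finset.sum_ite_eq' Aᶜ v (fun _ => (1 : ℤ))]
        simp [hv]
      · simp [hyu]
    rw [h3, h4]
    simp [hyv]
  · have h2 : ∑ x ∈ A, cvec k x y = ∑ x ∈ A, (k x y : ℤ) :=
      Finset.sum_congr rfl fun x hx => by
        have : y ≠ x := fun h => hyA (h ▸ hx)
        simp [cvec, this, hsym]
    rw [h2]
    have h3 : ∀ x ∈ A, (k x y : ℤ) = if x = u ∧ y = v then 1 else 0 :=
      fun x hx => hcross x hx y hyA
    rw [Finset.sum_congr rfl h3]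
    have hyu : y ≠ u := fun h => hyA (h ▸ hu)
    by_cases hyv : y = v
    · simp only [hyv, and_true]
      rw [Finset.sum_ite_eq' A u (fun _ => (1 : ℤ))]
      simp [hu, hyu, hyv, Ne.symm huv]
    · simp [hyv, hyu]

lemma bridge_cross (k : V → V → ℕ) (hsym : ∀ u v, k u v = k v u)
    (hconn : (graphOf k).Connected) {u v : V} (hbr : IsBridge k u v) :
    ∃ A : Finset V, u ∈ A ∧ v ∉ A ∧
      ∀ x ∈ A, ∀ y, y ∉ A → (k x y : ℤ) = if x = u ∧ y = v then 1 else 0 := by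
  obtain ⟨hne, hkuv, hdisc⟩ := hbr
  set G' := graphOf (removeEdge k u v) with hG'
  refine ⟨Finset.univ.filter (fun x => G'.Reachable u x), ?_, ?_, ?_⟩
  · simp only [Finset.mem_filter, Finset.mem_univ, true_and]
    exact SimpleGraph.Reachable.refl u
  · simp only [Finset.mem_filter, Finset.mem_univ, true_and]
    intro hreach
    apply hdisc
    have step : ∀ a b : V, (graphOf k).Adj a b → G'.Reachable a b := by
      intro a b hab
      by_cases h1 : (a = u ∧ b = v) ∨ (a = v ∧ b = u)
      · rcases h1 with ⟨rfl, rfl⟩ | ⟨rfl, rfl⟩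
        · exact hreach
        · exact hreach.symm
      · apply SimpleGraph.Adj.reachable
        obtain ⟨hne', hpos⟩ := hab
        have hpos' : 0 < k a b := by
          rcases hpos with h | h
          · exact h
          · rw [hsym]; exact h
        refine ⟨hne', Or.inl ?_⟩
        have : removeEdge k u v a b = k a b := by simp [removeEdge, h1]
        rw [this]; exact hpos'
    have walk_reach : ∀ {a c : V}, (graphOf k).Walk a c → G'.Reachable a c := by
      intro a c p
      induction p with
      | nil => exact SimpleGraph.Reachable.refl _
      | cons hadj _ ih => exact (step _ _ hadj).trans ih
    have reach_u : ∀ x : V, G'.Reachable u x := fun x => by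
      obtain ⟨p⟩ := hconn.preconnected u x
      exact walk_reach p
    haveI : Nonempty V := ⟨u⟩
    exact SimpleGraph.Connected.mk fun x y => (reach_u x).symm.trans (reach_u y)
  · intro x hx y hy
    simp only [Finset.mem_filter, Finset.mem_univ, true_and] at hx hy
    by_cases hc : x = u ∧ y = v
    · simp [hc, hkuv]
    · simp only [hc, if_false]
      by_contra hne0
      have hpos : 0 < k x y := Nat.pos_of_ne_zero (fun h => hne0 (by exact_mod_cast h))
      have hxy : x ≠ y := fun h => hy (h ▸ hx)
      have hnot2 : ¬ (x = v ∧ y = u) := by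
        rintro ⟨rfl, rfl⟩
        exact hy (SimpleGraph.Reachable.refl _)
      have hadj : G'.Adj x y := by
        refine ⟨hxy, Or.inl ?_⟩
        have : removeEdge k u v x y = k x y := by
          simp [removeEdge, hc, hnot2]
        rw [this]; exact hpos
      exact hy (hx.trans hadj.reachable)

lemma single_sub_single_mem_adj (k : V → V → ℕ) (hsym : ∀ u v, k u v = k v u)
    (hconn : (graphOf k).Connected)
    (htree : ∀ u v : V, u ≠ v → 0 < k u v → IsBridge k u v)
    {a b : V} (hadj : (graphOf k).Adj a b) :
    Pi.single a (1 : ℤ) - Pi.single b 1 ∈ Lambda k := by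
  obtain ⟨hne, hpos⟩ := hadj
  have hpos' : 0 < k a b := by
    rcases hpos with h | h
    · exact h
    · rw [hsym]; exact h
  obtain ⟨A, hu, hv, hcross⟩ := bridge_cross k hsym hconn (htree a b hne hpos')
  have hsum : ∑ x ∈ A, cvec k x = Pi.single b 1 - Pi.single a 1 :=
    sum_cvec_eq k hsym A a b hu hv hcross
  have hmem : ∑ x ∈ A, cvec k x ∈ Lambda k :=
    sum_mem fun x _ => AddSubgroup.subset_closure ⟨x, rfl⟩
  rw [hsum] at hmem
  have := (Lambda k).neg_mem hmem
  rwa [neg_sub] at this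

/-- In a connected tree-like multigraph (every edge joining two
distinct vertices is a bridge), `Λ = Z`, i.e. the degree class group is trivial. -/
theorem stmt1 (V : Type) [Fintype V] [DecidableEq V] (k : V → V → ℕ)
    (hsym : ∀ u v, k u v = k v u) (hconn : (graphOf k).Connected)
    (htree : ∀ u v : V, u ≠ v → 0 < k u v → IsBridge k u v) :
    Lambda k = Zsub V := by
  apply le_antisymm
  · rw [Lambda, AddSubgroup.closure_le]
    rintro _ ⟨v, rfl⟩
    show cvec k v ∈ Zsub V
    simp only [Zsub, AddMonoidHom.mem_ker, sumHom, AddMonoidHom.coe_mk,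
      ZeroHom.coe_mk]
    exact cvec_sum_zero k v
  · intro d hd
    have hd0 : ∑ x, d x = 0 := hd
    obtain ⟨v0⟩ := hconn.nonempty
    have key : ∀ a : V, Pi.single a (1 : ℤ) - Pi.single v0 1 ∈ Lambda k := by
      intro a
      obtain ⟨p⟩ := hconn.preconnected a v0
      induction p with
      | nil => simpa using (Lambda k).zero_mem
      | @cons x y z hadj p ih =>
        have h1 := single_sub_single_mem_adj k hsym hconn htree hadj
        have := (Lambda k).add_mem h1 ih
        rwa [sub_add_sub_cancel] at this
    have hrepr : d = ∑ a : V, d a • (Pi.single a (1 : ℤ) - Pi.single v0 1) := by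
      funext y
      rw [Finset.sum_apply]
      simp only [Pi.smul_apply, Pi.sub_apply, Pi.single_apply, smul_eq_mul,
        mul_sub, Finset.sum_sub_distrib, mul_ite, mul_one, mul_zero]
      rw [Finset.sum_ite_eq Finset.univ y d]
      by_cases hyv0 : y = v0 <;> simp [hyv0, hd0]
    rw [hrepr]
    exact sum_mem fun a _ => AddSubgroup.zsmul_mem _ (key a) _
end
end

section
/- Let (Γ,w) be a stable weighted graph of genus g ≥ 2 and let d, d' be balanced multidegrees of the same total degree d with d − d' ∈ Λ. If d is strictly balanced, then d' = d. Conversely, if d is balanced but not strictly balanced, then there exists a balanced multidegree d' ≠ d of total degree d with d − d' ∈ Λ. In other words, a class in Δ^d contains exactly one balanced multidegree if and only if that balanced multidegree is strictly balanced. -/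
open Finset

noncomputable section
open scoped Classical

variable {V : Type} [Fintype V] [DecidableEq V]

/-! ### Auxiliary development for `stmt3` -/

/-- Edge count (with multiplicity) between two finsets. -/
def auxE (k : V → V → ℕ) (X Y : Finset V) : ℤ := ∑ u ∈ X, ∑ v ∈ Y, (k u v : ℤ)

lemma auxE_nonneg (k : V → V → ℕ) (X Y : Finset V) : 0 ≤ auxE k X Y := by
  unfold auxE; positivity

lemma auxE_symm (k : V → V → ℕ) (hsym : ∀ u v, k u v = k v u) (X Y : Finset V) :
    auxE k X Y = auxE k Y X := by
  unfold auxE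
  rw [Finset.sum_comm]
  exact Finset.sum_congr rfl fun v _ => Finset.sum_congr rfl fun u _ => by rw [hsym]

lemma auxE_union_left (k : V → V → ℕ) {X X' : Finset V} (h : Disjoint X X') (Y : Finset V) :
    auxE k (X ∪ X') Y = auxE k X Y + auxE k X' Y := by
  unfold auxE; exact Finset.sum_union h

lemma auxE_union_right (k : V → V → ℕ) {Y Y' : Finset V} (h : Disjoint Y Y') (X : Finset V) :
    auxE k X (Y ∪ Y') = auxE k X Y + auxE k X Y' := by
  unfold auxE
  rw [← Finset.sum_add_distrib]
  exact Finset.sum_congr rfl fun u _ => Finset.sum_union h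

lemma auxDelta_eq (k : V → V → ℕ) (A : Finset V) : deltaA k A = auxE k A Aᶜ := rfl

/-- The Laplacian-type map whose image is `Lambda k`. -/
def auxLap (k : V → V → ℕ) (n : V → ℤ) : V → ℤ := fun u => ∑ v, n v * cvec k v u

lemma auxLap_mem (k : V → V → ℕ) (n : V → ℤ) : auxLap k n ∈ Lambda k := by
  have h : auxLap k n = ∑ v, n v • cvec k v := by
    funext u
    rw [Finset.sum_apply]
    rfl
  rw [h]
  exact AddSubgroup.sum_mem _ fun v _ =>
    AddSubgroup.zsmul_mem _ (AddSubgroup.subset_closure (Set.mem_range_self v)) (n v)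

lemma auxMem_lap {k : V → V → ℕ} {e : V → ℤ} (he : e ∈ Lambda k) :
    ∃ n : V → ℤ, e = auxLap k n := by
  refine AddSubgroup.closure_induction (p := fun x _ => ∃ n, x = auxLap k n) ?_ ?_ ?_ ?_ he
  · rintro x ⟨v, rfl⟩
    refine ⟨fun x => if x = v then 1 else 0, ?_⟩
    funext u
    simp [auxLap, ite_mul]
  · exact ⟨0, by funext u; simp [auxLap]⟩
  · rintro x y _ _ ⟨n, rfl⟩ ⟨m, rfl⟩
    exact ⟨n + m, by funext u; simp [auxLap, add_mul, Finset.sum_add_distrib]⟩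
  · rintro x _ ⟨n, rfl⟩
    exact ⟨-n, by funext u; simp [auxLap, neg_mul, Finset.sum_neg_distrib]⟩

lemma auxLap_apply (k : V → V → ℕ) (hsym : ∀ u v, k u v = k v u) (n : V → ℤ) (u : V) :
    auxLap k n u = ∑ v ∈ Finset.univ.erase u, (n v - n u) * (k u v : ℤ) := by
  show (∑ v, n v * cvec k v u) = _
  rw [← Finset.sum_erase_add _ _ (Finset.mem_univ u)]
  have h1 : ∀ v ∈ Finset.univ.erase u, n v * cvec k v u = n v * (k u v : ℤ) := by
    intro v hv
    have huv : u ≠ v := (Finset.ne_of_mem_erase hv).symm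
    simp [cvec, huv]
  have h2 : cvec k u u = -∑ x ∈ Finset.univ.erase u, (k u x : ℤ) := by
    have h2' : cvec k u u = -∑ x ∈ Finset.univ.erase u, (k x u : ℤ) := by
      simp [cvec]
    rw [h2', neg_inj]
    exact Finset.sum_congr rfl fun x _ => by rw [hsym]
  rw [Finset.sum_congr rfl h1, h2, mul_neg, Finset.mul_sum, ← sub_eq_add_neg,
    ← Finset.sum_sub_distrib]
  exact Finset.sum_congr rfl fun v _ => by ring

lemma auxCvec_colsum (k : V → V → ℕ) (v : V) : ∑ u : V, cvec k v u = 0 := by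
  rw [← Finset.sum_erase_add _ _ (Finset.mem_univ v)]
  have h1 : ∀ u ∈ Finset.univ.erase v, cvec k v u = (k u v : ℤ) := by
    intro u hu
    simp [cvec, Finset.ne_of_mem_erase hu]
  rw [Finset.sum_congr rfl h1]
  simp [cvec]

lemma auxTwist_sum (k : V → V → ℕ) (A B : Finset V) :
    ∑ u ∈ B, ∑ v ∈ A, cvec k v u = auxE k B (A \ B) - auxE k Bᶜ (A ∩ B) := by
  rw [Finset.sum_comm]
  have key : ∀ v ∈ A, (∑ u ∈ B, cvec k v u) =
      (if v ∈ B then -(∑ x ∈ Bᶜ, (k x v : ℤ)) else ∑ u ∈ B, (k u v : ℤ)) := by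
    intro v _
    by_cases hvB : v ∈ B
    · rw [if_pos hvB, ← Finset.sum_erase_add B _ hvB]
      have h1 : ∀ u ∈ B.erase v, cvec k v u = (k u v : ℤ) := fun u hu => by
        simp [cvec, Finset.ne_of_mem_erase hu]
      have h2 : cvec k v v = -(∑ x ∈ Finset.univ.erase v, (k x v : ℤ)) := by
        simp [cvec]
      rw [Finset.sum_congr rfl h1, h2]
      have hsub : B.erase v ⊆ Finset.univ.erase v := fun x hx =>
        Finset.mem_erase.2 ⟨(Finset.mem_erase.1 hx).1, Finset.mem_univ x⟩
      have hsd := Finset.sum_sdiff (f := fun x => (k x v : ℤ)) hsub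
      have hset : (Finset.univ.erase v) \ (B.erase v) = Bᶜ := by
        ext x
        by_cases hx : x = v
        · subst hx; simp [hvB]
        · simp [Finset.mem_sdiff, Finset.mem_erase, hx]
      rw [hset] at hsd
      linarith
    · rw [if_neg hvB]
      refine Finset.sum_congr rfl fun u hu => ?_
      have huv : u ≠ v := fun h => hvB (h ▸ hu)
      simp [cvec, huv]
  rw [Finset.sum_congr rfl key]
  have hA : (A ∩ B) ∪ (A \ B) = A := by
    ext x; simp only [Finset.mem_union, Finset.mem_inter, Finset.mem_sdiff]; tauto
  have hdisj : Disjoint (A ∩ B) (A \ B) := by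
    rw [Finset.disjoint_left]
    intro x hx hx'
    exact (Finset.mem_sdiff.1 hx').2 (Finset.mem_inter.1 hx).2
  conv_lhs => rw [← hA]
  rw [Finset.sum_union hdisj]
  have e1 : ∀ v ∈ A ∩ B, (if v ∈ B then -(∑ x ∈ Bᶜ, (k x v : ℤ)) else ∑ u ∈ B, (k u v : ℤ))
      = -(∑ x ∈ Bᶜ, (k x v : ℤ)) := fun v hv => if_pos (Finset.mem_inter.1 hv).2
  have e3 : ∀ v ∈ A \ B, (if v ∈ B then -(∑ x ∈ Bᶜ, (k x v : ℤ)) else ∑ u ∈ B, (k u v : ℤ))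
      = ∑ u ∈ B, (k u v : ℤ) := fun v hv => if_neg (Finset.mem_sdiff.1 hv).2
  rw [Finset.sum_congr rfl e1, Finset.sum_congr rfl e3]
  have c1 : ∑ v ∈ A ∩ B, ∑ x ∈ Bᶜ, (k x v : ℤ) = auxE k Bᶜ (A ∩ B) := Finset.sum_comm
  have c2 : ∑ v ∈ A \ B, ∑ u ∈ B, (k u v : ℤ) = auxE k B (A \ B) := Finset.sum_comm
  rw [Finset.sum_neg_distrib, c1, c2]
  ring

lemma auxEven (k : V → V → ℕ) (hsym : ∀ u v, k u v = k v u) :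
    2 ∣ ∑ u : V, ∑ v ∈ Finset.univ.erase u, k u v := by
  refine (ZMod.natCast_eq_zero_iff _ 2).1 ?_
  push_cast
  have step : ∀ u : V, (∑ v ∈ Finset.univ.erase u, (k u v : ZMod 2)) =
      ∑ v : V, (if v = u then 0 else (k u v : ZMod 2)) := by
    intro u
    have h0 : ∀ v ∈ Finset.univ.erase u, (k u v : ZMod 2)
        = (if v = u then 0 else (k u v : ZMod 2)) := fun v hv =>
      (if_neg (Finset.ne_of_mem_erase hv)).symm
    rw [Finset.sum_congr rfl h0]
    exact Finset.sum_erase _ (by simp)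
  rw [Finset.sum_congr rfl fun u _ => step u]
  have hconv : (∑ u : V, ∑ v : V, (if v = u then (0 : ZMod 2) else (k u v : ZMod 2)))
      = ∑ p : V × V,
          (fun p : V × V => if p.2 = p.1 then (0 : ZMod 2) else (k p.1 p.2 : ZMod 2)) p := by
    rw [Fintype.sum_prod_type]
  rw [hconv]
  refine Finset.sum_ninvolution Prod.swap ?_ ?_ (fun _ => Finset.mem_univ _)
    (fun a => a.swap_swap)
  · intro a
    by_cases h : a.2 = a.1
    · simp [h]
    · have h' : ¬ a.1 = a.2 := fun hh => h hh.symm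
      simp only [Prod.snd_swap, Prod.fst_swap, if_neg h, if_neg h']
      rw [hsym a.2 a.1]
      calc (k a.1 a.2 : ZMod 2) + (k a.1 a.2 : ZMod 2) = 2 * (k a.1 a.2 : ZMod 2) := by ring
        _ = 0 := by rw [show ((2 : ZMod 2)) = 0 by decide, zero_mul]
  · intro a ha h
    apply ha
    have h1 : a.2 = a.1 := congrArg Prod.fst h
    simp [h1]

lemma auxWA_univ (k : V → V → ℕ) (w : V → ℕ) (hsym : ∀ u v, k u v = k v u) :
    wA k w Finset.univ = 2 * genus k w - 2 := by
  have hdvd := auxEven k hsym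
  have hc : (((∑ u : V, ∑ v ∈ Finset.univ.erase u, k u v) / 2 : ℕ) : ℤ) * 2
      = ((∑ u : V, ∑ v ∈ Finset.univ.erase u, k u v : ℕ) : ℤ) := by
    exact_mod_cast Nat.div_mul_cancel hdvd
  have hTT : (∑ v : V, ∑ u ∈ Finset.univ.erase v, (k u v : ℤ))
      = ((∑ u : V, ∑ v ∈ Finset.univ.erase u, k u v : ℕ) : ℤ) := by
    push_cast
    exact Finset.sum_congr rfl fun a _ => Finset.sum_congr rfl fun b _ => by rw [hsym]
  have hwa : wA k w Finset.univ
      = 2 * (∑ v, (w v : ℤ)) - 2 * (Fintype.card V : ℤ) + 2 * (∑ v, (k v v : ℤ))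
        + (∑ v : V, ∑ u ∈ Finset.univ.erase v, (k u v : ℤ)) := by
    unfold wA
    rw [Finset.sum_add_distrib, Finset.sum_add_distrib, Finset.sum_sub_distrib]
    rw [← Finset.mul_sum, ← Finset.mul_sum, Finset.sum_const, Finset.card_univ]
    push_cast
    ring
  have hgen : genus k w = (∑ v, (w v : ℤ)) + (((∑ v, (k v v : ℕ) : ℕ) : ℤ)
      + (((∑ u : V, ∑ v ∈ Finset.univ.erase u, k u v) / 2 : ℕ) : ℤ)
      - (Fintype.card V : ℤ) + 1) := by
    unfold genus numEdges
    push_cast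
    ring
  have hloop : ((∑ v, (k v v : ℕ) : ℕ) : ℤ) = ∑ v, (k v v : ℤ) := by push_cast; rfl
  rw [hwa, hTT, hgen, hloop]
  linarith

lemma auxMA_compl (k : V → V → ℕ) (w : V → ℕ) (hsym : ∀ u v, k u v = k v u)
    (hg : 2 ≤ genus k w) (D : ℤ) (A : Finset V) :
    mA k w D A + mA k w D Aᶜ = (D : ℚ) - (deltaA k A : ℚ) := by
  have hG : ((2 * genus k w - 2 : ℤ) : ℚ) ≠ 0 := by
    have h2 : (0 : ℤ) < 2 * genus k w - 2 := by linarith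
    exact_mod_cast h2.ne'
  have hw : wA k w A + wA k w Aᶜ = 2 * genus k w - 2 := by
    rw [← auxWA_univ k w hsym]
    exact Finset.sum_add_sum_compl A _
  have hwQ : ((wA k w A : ℤ) : ℚ) + ((wA k w Aᶜ : ℤ) : ℚ) = ((2 * genus k w - 2 : ℤ) : ℚ) := by
    exact_mod_cast congrArg (fun x : ℤ => (x : ℚ)) hw
  have hδ : deltaA k Aᶜ = deltaA k A := by
    have h1 : deltaA k Aᶜ = auxE k Aᶜ A := by
      rw [auxDelta_eq, compl_compl]
    rw [h1, auxE_symm k hsym, ← auxDelta_eq]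
  unfold mA
  rw [hδ]
  have h1 : (D : ℚ) * (wA k w A : ℚ) / ((2 * genus k w - 2 : ℤ) : ℚ)
      + (D : ℚ) * (wA k w Aᶜ : ℚ) / ((2 * genus k w - 2 : ℤ) : ℚ) = (D : ℚ) := by
    rw [← add_div, ← mul_add, hwQ, mul_div_assoc, div_self hG, mul_one]
  linarith

lemma auxDelta_inter_union (k : V → V → ℕ) (hsym : ∀ u v, k u v = k v u) (A B : Finset V) :
    deltaA k (A ∩ B) + deltaA k (A ∪ B) + 2 * auxE k (A \ B) (B \ A)
      = deltaA k A + deltaA k B := by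
  set P := A ∩ B with hP
  set Q := A \ B with hQ
  set R := B \ A with hR
  set S := (A ∪ B)ᶜ with hS
  have memP : ∀ x, x ∈ P ↔ x ∈ A ∧ x ∈ B := fun x => by rw [hP]; exact Finset.mem_inter
  have memQ : ∀ x, x ∈ Q ↔ x ∈ A ∧ x ∉ B := fun x => by rw [hQ]; exact Finset.mem_sdiff
  have memR : ∀ x, x ∈ R ↔ x ∈ B ∧ x ∉ A := fun x => by rw [hR]; exact Finset.mem_sdiff
  have memS : ∀ x, x ∈ S ↔ x ∉ A ∧ x ∉ B := fun x => by
    rw [hS, Finset.mem_compl, Finset.mem_union]; tauto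
  have hPQ : Disjoint P Q := by
    rw [Finset.disjoint_left]; intro x hx hx'
    exact ((memQ x).1 hx').2 ((memP x).1 hx).2
  have hPR : Disjoint P R := by
    rw [Finset.disjoint_left]; intro x hx hx'
    exact ((memR x).1 hx').2 ((memP x).1 hx).1
  have hQR : Disjoint Q R := by
    rw [Finset.disjoint_left]; intro x hx hx'
    exact ((memR x).1 hx').2 ((memQ x).1 hx).1
  have hQS : Disjoint Q S := by
    rw [Finset.disjoint_left]; intro x hx hx'
    exact ((memS x).1 hx').1 ((memQ x).1 hx).1
  have hRS : Disjoint R S := by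
    rw [Finset.disjoint_left]; intro x hx hx'
    exact ((memS x).1 hx').2 ((memR x).1 hx).1
  have hAeq : A = P ∪ Q := by
    ext x; rw [Finset.mem_union, memP x, memQ x]; tauto
  have hAc : Aᶜ = R ∪ S := by
    ext x; rw [Finset.mem_compl, Finset.mem_union, memR x, memS x]; tauto
  have hBeq : B = P ∪ R := by
    ext x; rw [Finset.mem_union, memP x, memR x]; tauto
  have hBc : Bᶜ = Q ∪ S := by
    ext x; rw [Finset.mem_compl, Finset.mem_union, memQ x, memS x]; tauto
  have hIc : Pᶜ = Q ∪ (R ∪ S) := by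
    ext x
    rw [Finset.mem_compl, Finset.mem_union, Finset.mem_union, memP x, memQ x, memR x, memS x]
    tauto
  have hUeq : A ∪ B = P ∪ (Q ∪ R) := by
    ext x
    rw [Finset.mem_union, Finset.mem_union, Finset.mem_union, memP x, memQ x, memR x]
    tauto
  have hUc : (A ∪ B)ᶜ = S := hS.symm
  have dA : deltaA k A = auxE k P R + auxE k P S + (auxE k Q R + auxE k Q S) := by
    rw [auxDelta_eq, hAc, hAeq, auxE_union_left k hPQ,
      auxE_union_right k hRS, auxE_union_right k hRS]
  have dB : deltaA k B = auxE k P Q + auxE k P S + (auxE k R Q + auxE k R S) := by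
    rw [auxDelta_eq, hBc, hBeq, auxE_union_left k hPR,
      auxE_union_right k hQS, auxE_union_right k hQS]
  have dI : deltaA k (A ∩ B) = auxE k P Q + (auxE k P R + auxE k P S) := by
    rw [auxDelta_eq, hIc,
      auxE_union_right k (Finset.disjoint_union_right.2 ⟨hQR, hQS⟩),
      auxE_union_right k hRS]
  have dU : deltaA k (A ∪ B) = auxE k P S + (auxE k Q S + auxE k R S) := by
    rw [auxDelta_eq, hUc, hUeq,
      auxE_union_left k (Finset.disjoint_union_right.2 ⟨hPQ, hPR⟩),
      auxE_union_left k hQR]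
  have hsymQR : auxE k R Q = auxE k Q R := auxE_symm k hsym R Q
  rw [dA, dB, dI, dU]
  linarith

lemma auxMA_supermod (k : V → V → ℕ) (w : V → ℕ) (hsym : ∀ u v, k u v = k v u)
    (D : ℤ) (A B : Finset V) :
    mA k w D (A ∩ B) + mA k w D (A ∪ B)
      = mA k w D A + mA k w D B + (auxE k (A \ B) (B \ A) : ℚ) := by
  have hw : wA k w (A ∩ B) + wA k w (A ∪ B) = wA k w A + wA k w B := by
    unfold wA
    rw [add_comm]
    exact Finset.sum_union_inter
  have hδ := auxDelta_inter_union k hsym A B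
  have hwQ : ((wA k w (A ∩ B) : ℤ) : ℚ) + ((wA k w (A ∪ B) : ℤ) : ℚ)
      = ((wA k w A : ℤ) : ℚ) + ((wA k w B : ℤ) : ℚ) := by exact_mod_cast hw
  have hδQ : ((deltaA k (A ∩ B) : ℤ) : ℚ) + ((deltaA k (A ∪ B) : ℤ) : ℚ)
        + 2 * ((auxE k (A \ B) (B \ A) : ℤ) : ℚ)
      = ((deltaA k A : ℤ) : ℚ) + ((deltaA k B : ℤ) : ℚ) := by exact_mod_cast hδ
  unfold mA
  linear_combination ((D : ℚ) / ((2 * genus k w - 2 : ℤ) : ℚ)) * hwQ - (1 / 2) * hδQ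

lemma auxCross (k : V → V → ℕ) (hsym : ∀ u v, k u v = k v u)
    (hconn : (graphOf k).Connected) {A : Finset V} (h1 : A.Nonempty)
    (h2 : A ≠ Finset.univ) : ∃ u ∈ A, ∃ v ∈ Aᶜ, 0 < k u v := by
  obtain ⟨a, ha⟩ := h1
  obtain ⟨b, hb⟩ : ∃ b, b ∉ A := by
    by_contra h
    push_neg at h
    exact h2 (Finset.eq_univ_iff_forall.2 h)
  obtain ⟨p⟩ := hconn.preconnected a b
  clear hconn h2
  suffices H : ∀ (x y : V), (graphOf k).Walk x y → x ∈ A → y ∉ A →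
      ∃ u ∈ A, ∃ v ∈ Aᶜ, 0 < k u v from H a b p ha hb
  intro x y p
  induction p with
  | nil => intro hx hy; exact absurd hx hy
  | @cons x c y hadj q ih =>
    intro hx hy
    by_cases hc : c ∈ A
    · exact ih hc hy
    · refine ⟨x, hx, c, Finset.mem_compl.2 hc, ?_⟩
      obtain ⟨-, h | h⟩ := (hadj : x ≠ c ∧ (0 < k x c ∨ 0 < k c x))
      · exact h
      · rw [hsym]; exact h

lemma auxDelta_pos (k : V → V → ℕ) (hsym : ∀ u v, k u v = k v u)
    (hconn : (graphOf k).Connected) {A : Finset V} (h1 : A.Nonempty)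
    (h2 : A ≠ Finset.univ) : 1 ≤ deltaA k A := by
  obtain ⟨u, hu, v, hv, hk⟩ := auxCross k hsym hconn h1 h2
  have step1 : (1 : ℤ) ≤ (k u v : ℤ) := by exact_mod_cast hk
  have step2 : (k u v : ℤ) ≤ ∑ x ∈ Aᶜ, (k u x : ℤ) :=
    Finset.single_le_sum (f := fun x => (k u x : ℤ)) (fun x _ => Int.natCast_nonneg _) hv
  have step3 : ∑ x ∈ Aᶜ, (k u x : ℤ) ≤ ∑ y ∈ A, ∑ x ∈ Aᶜ, (k y x : ℤ) :=
    Finset.single_le_sum (f := fun y => ∑ x ∈ Aᶜ, (k y x : ℤ))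
      (fun y _ => Finset.sum_nonneg fun x _ => Int.natCast_nonneg _) hu
  calc (1 : ℤ) ≤ (k u v : ℤ) := step1
    _ ≤ _ := step2
    _ ≤ _ := step3

/-- A class in `Δ^d` contains exactly one balanced multidegree iff
that balanced multidegree is strictly balanced. -/
theorem stmt3 (V : Type) [Fintype V] [DecidableEq V] (k : V → V → ℕ) (w : V → ℕ)
    (hsym : ∀ u v, k u v = k v u) (hstab : IsStable k w) (hg : 2 ≤ genus k w)
    (D : ℤ) (d : V → ℤ) (hd : IsBalanced k w D d) :
    (IsStrictlyBalanced k w D d →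
      ∀ d' : V → ℤ, IsBalanced k w D d' → d - d' ∈ Lambda k → d' = d) ∧
    (¬ IsStrictlyBalanced k w D d →
      ∃ d' : V → ℤ, IsBalanced k w D d' ∧ d' ≠ d ∧ d - d' ∈ Lambda k) := by
  obtain ⟨hconn, -⟩ := hstab
  constructor
  · -- uniqueness for strictly balanced
    intro hsb d' hd' hmem
    by_contra hne
    obtain ⟨n, hn⟩ := auxMem_lap hmem
    haveI hVne : Nonempty V := hconn.nonempty
    have himg : (Finset.univ.image n).Nonempty := Finset.univ_nonempty.image n
    set M := (Finset.univ.image n).max' himg with hM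
    have hle : ∀ v, n v ≤ M := fun v =>
      Finset.le_max' _ _ (Finset.mem_image_of_mem n (Finset.mem_univ v))
    obtain ⟨v0, -, hv0⟩ := Finset.mem_image.1 ((Finset.univ.image n).max'_mem himg)
    set A := Finset.univ.filter (fun v => n v = M) with hA
    have hmemA : ∀ v, v ∈ A ↔ n v = M := fun v => by
      rw [hA, Finset.mem_filter]; simp
    have hAne : A.Nonempty := ⟨v0, (hmemA v0).2 hv0⟩
    have hAuniv : A ≠ Finset.univ := by
      intro hAu
      apply hne
      have hall : ∀ v, n v = M := fun v => (hmemA v).1 (hAu ▸ Finset.mem_univ v)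
      have hz : d - d' = 0 := by
        rw [hn]
        funext u
        show auxLap k n u = 0
        rw [auxLap_apply k hsym]
        exact Finset.sum_eq_zero fun v _ => by rw [hall v, hall u]; ring
      exact (sub_eq_zero.1 hz).symm
    have hstep : ∀ u ∈ A, auxLap k n u ≤ -(∑ v ∈ Aᶜ, (k u v : ℤ)) := by
      intro u hu
      have hnu : n u = M := (hmemA u).1 hu
      rw [auxLap_apply k hsym]
      have hsplit : Finset.univ.erase u = (A.erase u) ∪ Aᶜ := by
        ext x
        simp only [Finset.mem_erase, Finset.mem_univ, and_true, Finset.mem_union,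
          Finset.mem_compl]
        constructor
        · intro hxu
          by_cases hxA : x ∈ A
          · exact Or.inl ⟨hxu, hxA⟩
          · exact Or.inr hxA
        · rintro (⟨hxu, -⟩ | hxA)
          · exact hxu
          · exact fun h => hxA (h ▸ hu)
      have hdisj : Disjoint (A.erase u) Aᶜ :=
        (disjoint_compl_right : Disjoint A Aᶜ).mono_left (Finset.erase_subset _ _)
      rw [hsplit, Finset.sum_union hdisj]
      have hz : ∑ v ∈ A.erase u, (n v - n u) * (k u v : ℤ) = 0 :=
        Finset.sum_eq_zero fun v hv => by
          rw [(hmemA v).1 (Finset.mem_of_mem_erase hv), hnu]; ring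
      rw [hz, zero_add]
      have hterm : ∀ v ∈ Aᶜ, (n v - n u) * (k u v : ℤ) ≤ -(k u v : ℤ) := by
        intro v hv
        have hvA : v ∉ A := Finset.mem_compl.1 hv
        have hlt : n v < M := lt_of_le_of_ne (hle v) (fun h => hvA ((hmemA v).2 h))
        have h1 : n v - n u ≤ -1 := by rw [hnu]; omega
        calc (n v - n u) * (k u v : ℤ) ≤ (-1) * (k u v : ℤ) :=
              mul_le_mul_of_nonneg_right h1 (by positivity)
          _ = -(k u v : ℤ) := by ring
      calc ∑ v ∈ Aᶜ, (n v - n u) * (k u v : ℤ) ≤ ∑ v ∈ Aᶜ, -(k u v : ℤ) :=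
            Finset.sum_le_sum hterm
        _ = -(∑ v ∈ Aᶜ, (k u v : ℤ)) := by rw [Finset.sum_neg_distrib]
    have hsum : degA d A - degA d' A ≤ -(deltaA k A) := by
      have heq : degA d A - degA d' A = ∑ u ∈ A, auxLap k n u := by
        unfold degA
        rw [← Finset.sum_sub_distrib]
        refine Finset.sum_congr rfl fun u _ => ?_
        have h := congrFun hn u
        simpa using h
      rw [heq]
      calc ∑ u ∈ A, auxLap k n u ≤ ∑ u ∈ A, -(∑ v ∈ Aᶜ, (k u v : ℤ)) :=
            Finset.sum_le_sum hstep
        _ = -(∑ u ∈ A, ∑ v ∈ Aᶜ, (k u v : ℤ)) := by rw [Finset.sum_neg_distrib]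
        _ = -(deltaA k A) := rfl
    have hAne' : A ≠ ∅ := hAne.ne_empty
    have hstrict := hsb.2 A hAne' hAuniv
    have htot' : degA d' Finset.univ = D := hd'.1
    have hsplitD : degA d' A + degA d' Aᶜ = D := by
      rw [← htot']
      exact Finset.sum_add_sum_compl A d'
    have hlo := hd'.2 Aᶜ
    have hmc := auxMA_compl k w hsym hg D A
    have hq1 : (degA d A : ℚ) - (degA d' A : ℚ) ≤ -((deltaA k A : ℤ) : ℚ) := by
      exact_mod_cast hsum
    have hq2 : (degA d' A : ℚ) + (degA d' Aᶜ : ℚ) = (D : ℚ) := by exact_mod_cast hsplitD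
    linarith
  · -- existence of a second balanced multidegree
    intro hnsb
    have hex : ∃ A : Finset V, A ≠ ∅ ∧ A ≠ Finset.univ ∧ (degA d A : ℚ) = mA k w D A := by
      by_contra h
      push_neg at h
      exact hnsb ⟨hd, fun A hA1 hA2 =>
        lt_of_le_of_ne (hd.2 A) (fun heq => h A (Finset.nonempty_iff_ne_empty.2 hA1) hA2 heq.symm)⟩
    obtain ⟨A, hA1, hA2, hEq⟩ := hex
    set d' : V → ℤ := fun u => d u - ∑ v ∈ A, cvec k v u with hd'def
    have hdeg : ∀ B : Finset V,
        degA d' B = degA d B - auxE k B (A \ B) + auxE k Bᶜ (A ∩ B) := by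
      intro B
      unfold degA
      have h1 : ∑ u ∈ B, d' u = ∑ u ∈ B, d u - ∑ u ∈ B, ∑ v ∈ A, cvec k v u := by
        rw [← Finset.sum_sub_distrib]
      rw [h1, auxTwist_sum k A B]
      ring
    have htot' : degA d' Finset.univ = D := by
      have h := hdeg Finset.univ
      have hs1 : A \ Finset.univ = ∅ := by simp
      have hs2 : (Finset.univ : Finset V)ᶜ = ∅ := by simp
      rw [hs1, hs2] at h
      have e0 : auxE k Finset.univ (∅ : Finset V) = 0 := by simp [auxE]
      have e0' : auxE k (∅ : Finset V) (A ∩ Finset.univ) = 0 := by simp [auxE]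
      rw [e0, e0'] at h
      rw [h, sub_zero, add_zero]
      exact hd.1
    have hbal : ∀ B : Finset V, mA k w D B ≤ (degA d' B : ℚ) := by
      intro B
      have hP := hd.2 (A ∩ B)
      have hU := hd.2 (A ∪ B)
      have hsup := auxMA_supermod k w hsym D A B
      have hBsplit : (A ∩ B) ∪ (B \ A) = B := by
        ext x; simp only [Finset.mem_union, Finset.mem_inter, Finset.mem_sdiff]; tauto
      have hBdisj : Disjoint (A ∩ B) (B \ A) := by
        rw [Finset.disjoint_left]; intro x hx hx'
        exact (Finset.mem_sdiff.1 hx').2 (Finset.mem_inter.1 hx).1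
      have hUsplit : A ∪ (B \ A) = A ∪ B := by
        ext x; simp only [Finset.mem_union, Finset.mem_sdiff]; tauto
      have hUdisj : Disjoint A (B \ A) := by
        rw [Finset.disjoint_left]; intro x hx hx'
        exact (Finset.mem_sdiff.1 hx').2 hx
      have hdB : degA d B = degA d (A ∩ B) + degA d (B \ A) := by
        unfold degA
        conv_lhs => rw [← hBsplit]
        exact Finset.sum_union hBdisj
      have hdU : degA d (A ∪ B) = degA d A + degA d (B \ A) := by
        unfold degA
        conv_lhs => rw [← hUsplit]
        exact Finset.sum_union hUdisj
      have hBc : Bᶜ = (A \ B) ∪ (A ∪ B)ᶜ := by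
        ext x
        simp only [Finset.mem_compl, Finset.mem_union, Finset.mem_sdiff]
        tauto
      have hBcdisj : Disjoint (A \ B) ((A ∪ B)ᶜ) := by
        rw [Finset.disjoint_left]; intro x hx hx'
        exact Finset.mem_compl.1 hx' (Finset.mem_union_left _ (Finset.mem_sdiff.1 hx).1)
      have he1 : auxE k B (A \ B) = auxE k (A ∩ B) (A \ B) + auxE k (B \ A) (A \ B) := by
        rw [show auxE k B (A \ B) = auxE k ((A ∩ B) ∪ (B \ A)) (A \ B) from by rw [hBsplit]]
        exact auxE_union_left k hBdisj _
      have he2 : auxE k Bᶜ (A ∩ B)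
          = auxE k (A \ B) (A ∩ B) + auxE k ((A ∪ B)ᶜ) (A ∩ B) := by
        rw [hBc]
        exact auxE_union_left k hBcdisj _
      have hdd := hdeg B
      have hq0 : (degA d' B : ℚ) = (degA d B : ℚ) - ((auxE k B (A \ B) : ℤ) : ℚ)
          + ((auxE k Bᶜ (A ∩ B) : ℤ) : ℚ) := by exact_mod_cast hdd
      have hq1 : ((auxE k B (A \ B) : ℤ) : ℚ)
          = ((auxE k (A ∩ B) (A \ B) : ℤ) : ℚ) + ((auxE k (B \ A) (A \ B) : ℤ) : ℚ) := by
        exact_mod_cast he1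
      have hq2 : ((auxE k Bᶜ (A ∩ B) : ℤ) : ℚ)
          = ((auxE k (A \ B) (A ∩ B) : ℤ) : ℚ) + ((auxE k ((A ∪ B)ᶜ) (A ∩ B) : ℤ) : ℚ) := by
        exact_mod_cast he2
      have hq3 : (degA d B : ℚ) = (degA d (A ∩ B) : ℚ) + (degA d (B \ A) : ℚ) := by
        exact_mod_cast hdB
      have hq4 : (degA d (A ∪ B) : ℚ) = (degA d A : ℚ) + (degA d (B \ A) : ℚ) := by
        exact_mod_cast hdU
      have hq5 : ((auxE k (A ∩ B) (A \ B) : ℤ) : ℚ) = ((auxE k (A \ B) (A ∩ B) : ℤ) : ℚ) := by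
        exact_mod_cast auxE_symm k hsym (A ∩ B) (A \ B)
      have hq6 : ((auxE k (A \ B) (B \ A) : ℤ) : ℚ)
          = ((auxE k (B \ A) (A \ B) : ℤ) : ℚ) := by
        exact_mod_cast auxE_symm k hsym (A \ B) (B \ A)
      have hq7 : (0 : ℚ) ≤ ((auxE k ((A ∪ B)ᶜ) (A ∩ B) : ℤ) : ℚ) := by
        exact_mod_cast auxE_nonneg k ((A ∪ B)ᶜ) (A ∩ B)
      linarith
    have hdelta : 1 ≤ deltaA k A :=
      auxDelta_pos k hsym hconn (Finset.nonempty_iff_ne_empty.2 hA1) hA2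
    have hdA' : degA d' A = degA d A + deltaA k A := by
      have h := hdeg A
      rw [Finset.sdiff_self, Finset.inter_self] at h
      have e0 : auxE k A (∅ : Finset V) = 0 := by simp [auxE]
      have e1 : auxE k Aᶜ A = deltaA k A := by
        rw [auxE_symm k hsym Aᶜ A]
        exact (auxDelta_eq k A).symm
      rw [e0, e1] at h
      rw [h]; ring
    have hne : d' ≠ d := by
      intro h
      rw [h] at hdA'
      linarith
    have hmem : d - d' ∈ Lambda k := by
      have hdiff : d - d' = ∑ v ∈ A, cvec k v := by
        funext u
        rw [Pi.sub_apply, Finset.sum_apply]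
        simp only [hd'def]
        ring
      rw [hdiff]
      exact AddSubgroup.sum_mem _ fun v _ => AddSubgroup.subset_closure (Set.mem_range_self v)
    exact ⟨d', ⟨htot', hbal⟩, hne, hmem⟩

end
end

section
/- Let (Γ,w) be a stable weighted graph of genus g ≥ 2 and d an integer. Then the sets B_d(Γ,w) and B̄_d(Γ,w) are finite, the set Δ^d of equivalence classes of multidegrees of total degree d has the same (finite) cardinality as the degree class group Δ, and #B_d(Γ,w) ≤ #Δ ≤ #B̄_d(Γ,w). -/
open Finset

noncomputable section
open scoped Classical

variable {V : Type} [Fintype V] [DecidableEq V]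

/-! ### Auxiliary infrastructure for stmt4 -/

/-- Off-diagonal multiplicity, as an integer. -/
def kzI (k : V → V → ℕ) : V → V → ℤ := fun u v => if u = v then 0 else (k u v : ℤ)

lemma kzI_nonneg (k : V → V → ℕ) (u v : V) : 0 ≤ kzI k u v := by
  unfold kzI; split <;> positivity

lemma kzI_symm (k : V → V → ℕ) (hsym : ∀ u v, k u v = k v u) (u v : V) :
    kzI k u v = kzI k v u := by
  unfold kzI
  by_cases h : u = v
  · subst h; simp
  · rw [if_neg h, if_neg (Ne.symm h), hsym]

/-- Indicator of a finset, as an integer. -/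
def indI (A : Finset V) (u : V) : ℤ := if u ∈ A then 1 else 0

lemma indI_nonneg (A : Finset V) (u : V) : 0 ≤ indI A u := by
  unfold indI; split <;> norm_num

lemma indI_compl (A : Finset V) (u : V) : indI Aᶜ u = 1 - indI A u := by
  unfold indI; by_cases h : u ∈ A <;> simp [h]

lemma indI_union (A B : Finset V) (u : V) :
    indI (A ∪ B) u = indI A u + indI B u - indI A u * indI B u := by
  unfold indI; by_cases h1 : u ∈ A <;> by_cases h2 : u ∈ B <;>
    simp [h1, h2, Finset.mem_union]

lemma indI_inter (A B : Finset V) (u : V) :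
    indI (A ∩ B) u = indI A u * indI B u := by
  unfold indI; by_cases h1 : u ∈ A <;> by_cases h2 : u ∈ B <;>
    simp [h1, h2, Finset.mem_inter]

lemma indI_sdiff (A B : Finset V) (u : V) :
    indI (A \ B) u = indI A u * (1 - indI B u) := by
  unfold indI; by_cases h1 : u ∈ A <;> by_cases h2 : u ∈ B <;>
    simp [h1, h2, Finset.mem_sdiff]

lemma indI_univ (u : V) : indI (Finset.univ : Finset V) u = 1 := by
  simp [indI]

/-- Sum against the off-diagonal kernel. -/
def SK (k : V → V → ℕ) (f : V → V → ℤ) : ℤ := ∑ u, ∑ v, f u v * kzI k u v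

lemma SK_swap (k : V → V → ℕ) (hsym : ∀ u v, k u v = k v u) (f : V → V → ℤ) :
    SK k f = ∑ u, ∑ v, f v u * kzI k u v := by
  unfold SK
  rw [Finset.sum_comm]
  exact Finset.sum_congr rfl fun u _ => Finset.sum_congr rfl fun v _ => by
    rw [kzI_symm k hsym]

lemma SK_congr (k : V → V → ℕ) (hsym : ∀ u v, k u v = k v u) (f g : V → V → ℤ)
    (h : ∀ u v, f u v + f v u = g u v + g v u) : SK k f = SK k g := by
  have hgen : ∀ F : V → V → ℤ, 2 * SK k F = ∑ u, ∑ v, (F u v + F v u) * kzI k u v := by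
    intro F
    have h1 : SK k F = ∑ u, ∑ v, F u v * kzI k u v := rfl
    have h2 := SK_swap k hsym F
    calc 2 * SK k F = SK k F + SK k F := by ring
    _ = ∑ u, ∑ v, F u v * kzI k u v + ∑ u, ∑ v, F v u * kzI k u v := by rw [← h1, ← h2]
    _ = ∑ u, ∑ v, (F u v + F v u) * kzI k u v := by
        rw [← Finset.sum_add_distrib]
        exact Finset.sum_congr rfl fun u _ => by
          rw [← Finset.sum_add_distrib]
          exact Finset.sum_congr rfl fun v _ => by ring
  have : 2 * SK k f = 2 * SK k g := by
    rw [hgen, hgen]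
    exact Finset.sum_congr rfl fun u _ => Finset.sum_congr rfl fun v _ => by rw [h]
  exact mul_left_cancel₀ two_ne_zero this

lemma SK_add (k : V → V → ℕ) (f g : V → V → ℤ) :
    SK k (fun u v => f u v + g u v) = SK k f + SK k g := by
  unfold SK
  rw [← Finset.sum_add_distrib]
  exact Finset.sum_congr rfl fun u _ => by
    rw [← Finset.sum_add_distrib]
    exact Finset.sum_congr rfl fun v _ => by ring

lemma SK_mul (k : V → V → ℕ) (c : ℤ) (f : V → V → ℤ) :
    SK k (fun u v => c * f u v) = c * SK k f := by
  unfold SK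
  rw [Finset.mul_sum]
  exact Finset.sum_congr rfl fun u _ => by
    rw [Finset.mul_sum]
    exact Finset.sum_congr rfl fun v _ => by ring

/-- The edge-counting pairing `E(X,Y)`. -/
def EEI (k : V → V → ℕ) (X Y : Finset V) : ℤ := SK k (fun u v => indI X u * indI Y v)

lemma EEI_nonneg (k : V → V → ℕ) (X Y : Finset V) : 0 ≤ EEI k X Y := by
  refine Finset.sum_nonneg fun u _ => Finset.sum_nonneg fun v _ => ?_
  have := indI_nonneg X u; have := indI_nonneg Y v; have := kzI_nonneg k u v
  positivity

lemma EEI_symm (k : V → V → ℕ) (hsym : ∀ u v, k u v = k v u) (X Y : Finset V) :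
    EEI k X Y = EEI k Y X :=
  SK_congr k hsym _ _ fun u v => by ring

/-- Summing an integer indicator. -/
lemma sum_indI (Y : Finset V) (c : V → ℤ) : ∑ v, indI Y v * c v = ∑ v ∈ Y, c v := by
  have h : ∀ v, indI Y v * c v = if v ∈ Y then c v else 0 := by
    intro v; unfold indI; split <;> ring
  rw [Finset.sum_congr rfl fun v _ => h v, Finset.sum_ite_mem, Finset.univ_inter]

/-- `EEI` in terms of restricted sums. -/
lemma EEI_eq_sum (k : V → V → ℕ) (X Y : Finset V) :
    EEI k X Y = ∑ u ∈ X, ∑ v ∈ Y, kzI k u v := by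
  have h1 : EEI k X Y = ∑ u, indI X u * (∑ v ∈ Y, kzI k u v) := by
    refine Finset.sum_congr rfl fun u _ => ?_
    rw [← sum_indI Y (fun v => kzI k u v), Finset.mul_sum]
    exact Finset.sum_congr rfl fun v _ => by ring
  rw [h1, sum_indI X (fun u => ∑ v ∈ Y, kzI k u v)]

lemma deltaA_eq_EEI (k : V → V → ℕ) (A : Finset V) : deltaA k A = EEI k A Aᶜ := by
  rw [EEI_eq_sum]
  unfold deltaA
  refine Finset.sum_congr rfl fun u hu => Finset.sum_congr rfl fun v hv => ?_
  have : u ≠ v := fun h => (Finset.mem_compl.mp hv) (h ▸ hu)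
  simp [kzI, this]
lemma SK_sub (k : V → V → ℕ) (f g : V → V → ℤ) :
    SK k (fun u v => f u v - g u v) = SK k f - SK k g := by
  unfold SK
  rw [← Finset.sum_sub_distrib]
  exact Finset.sum_congr rfl fun u _ => by
    rw [← Finset.sum_sub_distrib]
    exact Finset.sum_congr rfl fun v _ => by ring

lemma degA_union_inter (d : V → ℤ) (A B : Finset V) :
    degA d (A ∪ B) + degA d (A ∩ B) = degA d A + degA d B :=
  Finset.sum_union_inter

lemma wA_union_inter (k : V → V → ℕ) (w : V → ℕ) (A B : Finset V) :
    wA k w (A ∪ B) + wA k w (A ∩ B) = wA k w A + wA k w B :=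
  Finset.sum_union_inter

lemma deltaA_decomp (k : V → V → ℕ) (X : Finset V) :
    deltaA k X = EEI k X Finset.univ - EEI k X X := by
  rw [deltaA_eq_EEI]
  have h : EEI k X Xᶜ + EEI k X X = EEI k X Finset.univ := by
    unfold EEI
    rw [← SK_add]
    congr 1
    funext u v
    rw [indI_compl, indI_univ]
    ring
  linarith

lemma EEI_univ_modular (k : V → V → ℕ) (A B : Finset V) :
    EEI k (A ∪ B) Finset.univ + EEI k (A ∩ B) Finset.univ
      = EEI k A Finset.univ + EEI k B Finset.univ := by
  rw [EEI_eq_sum, EEI_eq_sum, EEI_eq_sum, EEI_eq_sum]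
  exact Finset.sum_union_inter

lemma EEI_self_union_inter (k : V → V → ℕ) (hsym : ∀ u v, k u v = k v u) (A B : Finset V) :
    EEI k (A ∪ B) (A ∪ B) + EEI k (A ∩ B) (A ∩ B)
      = EEI k A A + EEI k B B + 2 * EEI k (A \ B) (B \ A) := by
  have h1 : EEI k (A ∪ B) (A ∪ B) + EEI k (A ∩ B) (A ∩ B)
      = SK k (fun u v => indI (A ∪ B) u * indI (A ∪ B) v + indI (A ∩ B) u * indI (A ∩ B) v) := by
    rw [SK_add]; rfl
  have h2 : EEI k A A + EEI k B B + 2 * EEI k (A \ B) (B \ A)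
      = SK k (fun u v => indI A u * indI A v + indI B u * indI B v
          + 2 * (indI (A \ B) u * indI (B \ A) v)) := by
    rw [SK_add, SK_add, SK_mul]; rfl
  rw [h1, h2]
  refine SK_congr k hsym _ _ fun u v => ?_
  simp only [indI_union, indI_inter, indI_sdiff]
  ring

lemma deltaA_union_inter (k : V → V → ℕ) (hsym : ∀ u v, k u v = k v u) (A B : Finset V) :
    deltaA k (A ∪ B) + deltaA k (A ∩ B)
      = deltaA k A + deltaA k B - 2 * EEI k (A \ B) (B \ A) := by
  have h1 := deltaA_decomp k (A ∪ B)
  have h2 := deltaA_decomp k (A ∩ B)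
  have h3 := deltaA_decomp k A
  have h4 := deltaA_decomp k B
  have h5 := EEI_univ_modular k A B
  have h6 := EEI_self_union_inter k hsym A B
  linarith

lemma deltaA_compl (k : V → V → ℕ) (hsym : ∀ u v, k u v = k v u) (A : Finset V) :
    deltaA k Aᶜ = deltaA k A := by
  rw [deltaA_eq_EEI, deltaA_eq_EEI, compl_compl, EEI_symm k hsym]

lemma deltaA_empty (k : V → V → ℕ) : deltaA k (∅ : Finset V) = 0 := by
  simp [deltaA]

lemma deltaA_univ (k : V → V → ℕ) : deltaA k (Finset.univ : Finset V) = 0 := by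
  simp [deltaA]

lemma wA_empty (k : V → V → ℕ) (w : V → ℕ) : wA k w (∅ : Finset V) = 0 := by
  simp [wA]

lemma degA_empty (d : V → ℤ) : degA d (∅ : Finset V) = 0 := by simp [degA]

/-- Parity of the off-diagonal degree sum. -/
lemma offdiag_sum_even (k : V → V → ℕ) (hsym : ∀ u v, k u v = k v u) :
    ∃ T, (∑ u, ∑ v ∈ Finset.univ.erase u, k u v) = T + T := by
  classical
  set e := Fintype.equivFin V with he
  set kn : V → V → ℕ := fun u v => if u = v then 0 else k u v with hkn
  have hstep1 : (∑ u, ∑ v ∈ Finset.univ.erase u, k u v) = ∑ u, ∑ v, kn u v := by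
    refine Finset.sum_congr rfl fun u _ => ?_
    rw [← Finset.sum_erase Finset.univ (by simp [hkn] : kn u u = 0)]
    refine Finset.sum_congr rfl fun v hv => ?_
    have hne : v ≠ u := Finset.ne_of_mem_erase hv
    simp only [hkn]
    rw [if_neg (Ne.symm hne)]
  have hsplit : ∀ u v, kn u v
      = (if e u < e v then kn u v else 0) + (if e v < e u then kn u v else 0) := by
    intro u v
    rcases lt_trichotomy (e u) (e v) with h | h | h
    · rw [if_pos h, if_neg (lt_asymm h), add_zero]
    · have huv : u = v := e.injective h
      subst huv
      simp [hkn]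
    · rw [if_neg (lt_asymm h), if_pos h, zero_add]
  refine ⟨∑ u, ∑ v, if e u < e v then kn u v else 0, ?_⟩
  rw [hstep1]
  have : (∑ u, ∑ v, kn u v)
      = (∑ u, ∑ v, if e u < e v then kn u v else 0)
        + (∑ u, ∑ v, if e v < e u then kn u v else 0) := by
    rw [← Finset.sum_add_distrib]
    refine Finset.sum_congr rfl fun u _ => ?_
    rw [← Finset.sum_add_distrib]
    exact Finset.sum_congr rfl fun v _ => hsplit u v
  rw [this]
  congr 1
  have hknsym : ∀ u v, kn u v = kn v u := by
    intro u v
    simp only [hkn]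
    by_cases h : u = v
    · subst h; rfl
    · rw [if_neg h, if_neg (Ne.symm h), hsym]
  rw [Finset.sum_comm]
  refine Finset.sum_congr rfl fun u _ => Finset.sum_congr rfl fun v _ => ?_
  rw [hknsym]

lemma wA_univ (k : V → V → ℕ) (w : V → ℕ) (hsym : ∀ u v, k u v = k v u) :
    wA k w (Finset.univ : Finset V) = 2 * genus k w - 2 := by
  obtain ⟨T, hT⟩ := offdiag_sum_even k hsym
  have hdiv : (∑ u, ∑ v ∈ Finset.univ.erase u, k u v) / 2 = T := by omega
  have hcross : (∑ v, ∑ u ∈ Finset.univ.erase v, (k u v : ℤ)) = 2 * (T : ℤ) := by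
    have h1 : (∑ v, ∑ u ∈ Finset.univ.erase v, (k u v : ℤ))
        = ((∑ v, ∑ u ∈ Finset.univ.erase v, k u v : ℕ) : ℤ) := by push_cast; ring
    have h2 : (∑ v, ∑ u ∈ Finset.univ.erase v, k u v)
        = (∑ u, ∑ v ∈ Finset.univ.erase u, k u v) := by
      refine Finset.sum_congr rfl fun v _ => Finset.sum_congr rfl fun u _ => ?_
      rw [hsym]
    rw [h1, h2, hT]; push_cast; ring
  unfold wA genus numEdges
  rw [hdiv]
  have hexp : (∑ v, (2 * (w v : ℤ) - 2 + 2 * (k v v : ℤ) + ∑ u ∈ Finset.univ.erase v, (k u v : ℤ)))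
      = 2 * (∑ v, (w v : ℤ)) - 2 * (Fintype.card V : ℤ) + 2 * (∑ v, (k v v : ℤ))
        + (∑ v, ∑ u ∈ Finset.univ.erase v, (k u v : ℤ)) := by
    rw [Finset.sum_add_distrib, Finset.sum_add_distrib, Finset.sum_sub_distrib]
    rw [← Finset.mul_sum, ← Finset.mul_sum]
    simp [Finset.card_univ, mul_comm]
  rw [hexp, hcross]
  push_cast
  ring

/-- A proper nonempty subset of a connected multigraph has an edge across. -/
lemma exists_cross_adj (k : V → V → ℕ) (hconn : (graphOf k).Connected)
    {A : Finset V} (hA : A.Nonempty) (hA2 : A ≠ Finset.univ) :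
    ∃ u v, u ∈ A ∧ v ∉ A ∧ (graphOf k).Adj u v := by
  obtain ⟨a, ha⟩ := hA
  obtain ⟨b, hb⟩ : ∃ b, b ∉ A := by
    by_contra h
    push_neg at h
    exact hA2 (Finset.eq_univ_iff_forall.mpr h)
  obtain ⟨p⟩ := hconn.preconnected a b
  clear hA2
  induction p with
  | nil => exact absurd ha hb
  | @cons x y z hadj q ih =>
    by_cases hy : y ∈ A
    · exact ih hy hb
    · exact ⟨x, y, ha, hy, hadj⟩

lemma one_le_deltaA (k : V → V → ℕ) (hsym : ∀ u v, k u v = k v u)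
    (hconn : (graphOf k).Connected) {A : Finset V} (hA : A.Nonempty)
    (hA2 : A ≠ Finset.univ) : 1 ≤ deltaA k A := by
  obtain ⟨u, v, hu, hv, hadj⟩ := exists_cross_adj k hconn hA hA2
  have hk : 1 ≤ (k u v : ℤ) := by
    rcases hadj.2 with h | h
    · exact_mod_cast h
    · rw [hsym]; exact_mod_cast h
  unfold deltaA
  calc (1 : ℤ) ≤ (k u v : ℤ) := hk
  _ ≤ ∑ x ∈ Aᶜ, (k u x : ℤ) :=
      Finset.single_le_sum (f := fun x => (k u x : ℤ)) (fun i _ => Int.natCast_nonneg _)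
        (Finset.mem_compl.mpr hv)
  _ ≤ ∑ y ∈ A, ∑ x ∈ Aᶜ, (k y x : ℤ) :=
      Finset.single_le_sum (f := fun y => ∑ x ∈ Aᶜ, (k y x : ℤ))
        (fun i _ => Finset.sum_nonneg fun j _ => Int.natCast_nonneg _) hu

lemma cvec_eq (k : V → V → ℕ) (a v : V) :
    cvec k a v = kzI k v a - (if v = a then ∑ x, kzI k x a else 0) := by
  have hcol : (∑ x, kzI k x a) = ∑ x ∈ Finset.univ.erase a, (k x a : ℤ) := by
    rw [← Finset.sum_erase (f := fun x => kzI k x a) (a := a) Finset.univ (by simp [kzI])]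
    refine Finset.sum_congr rfl fun x hx => ?_
    simp [kzI, Finset.ne_of_mem_erase hx]
  unfold cvec
  by_cases h : v = a
  · subst h
    rw [if_pos rfl, if_pos rfl, hcol]
    simp [kzI]
  · rw [if_neg h, if_neg h, sub_zero]
    simp [kzI, h]

lemma sum_cvec_coords (k : V → V → ℕ) (a : V) : ∑ v, cvec k a v = 0 := by
  have : (∑ v, cvec k a v)
      = (∑ v, kzI k v a) - ∑ v, (if v = a then ∑ x, kzI k x a else 0) := by
    rw [← Finset.sum_sub_distrib]
    exact Finset.sum_congr rfl fun v _ => cvec_eq k a v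
  rw [this, Finset.sum_ite_eq' Finset.univ a (fun _ => ∑ x, kzI k x a)]
  simp

lemma sum_cvec_gens (k : V → V → ℕ) (hsym : ∀ u v, k u v = k v u) (u : V) :
    ∑ a, cvec k a u = 0 := by
  have h : (∑ a, cvec k a u)
      = (∑ a, kzI k u a) - ∑ a, (if u = a then ∑ x, kzI k x a else 0) := by
    rw [← Finset.sum_sub_distrib]
    exact Finset.sum_congr rfl fun a _ => cvec_eq k a u
  rw [h, Finset.sum_ite_eq Finset.univ u (fun a => ∑ x, kzI k x a)]
  simp only [Finset.mem_univ, if_true]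
  rw [sub_eq_zero]
  exact Finset.sum_congr rfl fun a _ => kzI_symm k hsym u a

lemma sum_cvec_pair (k : V → V → ℕ) (hsym : ∀ u v, k u v = k v u) (A B : Finset V) :
    (∑ v ∈ B, ∑ a ∈ A, cvec k a v) = EEI k B A - EEI k (A ∩ B) Finset.univ := by
  have h1 : (∑ v ∈ B, ∑ a ∈ A, cvec k a v)
      = (∑ v ∈ B, ∑ a ∈ A, kzI k v a)
        - ∑ v ∈ B, ∑ a ∈ A, (if v = a then ∑ x, kzI k x a else 0) := by
    rw [← Finset.sum_sub_distrib]
    refine Finset.sum_congr rfl fun v _ => ?_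
    rw [← Finset.sum_sub_distrib]
    exact Finset.sum_congr rfl fun a _ => cvec_eq k a v
  have h2 : (∑ v ∈ B, ∑ a ∈ A, (if v = a then ∑ x, kzI k x a else 0))
      = EEI k (A ∩ B) Finset.univ := by
    have h3 : ∀ v, (∑ a ∈ A, (if v = a then ∑ x, kzI k x a else 0))
        = (if v ∈ A then ∑ x, kzI k x v else 0) :=
      fun v => Finset.sum_ite_eq A v (fun a => ∑ x, kzI k x a)
    rw [Finset.sum_congr rfl fun v _ => h3 v, Finset.sum_ite_mem, EEI_eq_sum,
      Finset.inter_comm]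
    refine Finset.sum_congr rfl fun v _ => Finset.sum_congr rfl fun x _ => ?_
    exact kzI_symm k hsym x v
  rw [h1, h2, EEI_eq_sum k B A]
/-- Integer-scaled violation: `2(2g-2)·(m_A - d_A)`. -/
def ivio (k : V → V → ℕ) (w : V → ℕ) (D : ℤ) (d : V → ℤ) (A : Finset V) : ℤ :=
  2 * D * wA k w A - (2 * genus k w - 2) * deltaA k A
    - 2 * (2 * genus k w - 2) * degA d A

lemma ivio_le_iff (k : V → V → ℕ) (w : V → ℕ) (hg : 2 ≤ genus k w) (D : ℤ)
    (d : V → ℤ) (A : Finset V) :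
    ivio k w D d A ≤ 0 ↔ mA k w D A ≤ (degA d A : ℚ) := by
  have hZ : (0 : ℤ) < 2 * (2 * genus k w - 2) := by omega
  have hQ : (0 : ℚ) < ((2 * (2 * genus k w - 2) : ℤ) : ℚ) := by exact_mod_cast hZ
  have hQ2 : ((2 * genus k w - 2 : ℤ) : ℚ) ≠ 0 := by
    have : (2 * genus k w - 2 : ℤ) ≠ 0 := by omega
    exact_mod_cast this
  have hkey : mA k w D A
      = ((2 * D * wA k w A - (2 * genus k w - 2) * deltaA k A : ℤ) : ℚ)
        / ((2 * (2 * genus k w - 2) : ℤ) : ℚ) := by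
    have expand : ∀ x y z : ℚ, z ≠ 0 → (x / z - y / 2) * (2 * z) = 2 * x - z * y := by
      intro x y z hz
      field_simp
    unfold mA
    rw [eq_div_iff (ne_of_gt hQ)]
    rw [show ((2 * (2 * genus k w - 2) : ℤ) : ℚ)
        = 2 * ((2 * genus k w - 2 : ℤ) : ℚ) by push_cast; ring]
    rw [expand _ _ _ hQ2]
    push_cast
    ring
  rw [hkey, div_le_iff₀ hQ]
  constructor
  · intro h
    have h2 : (2 * D * wA k w A - (2 * genus k w - 2) * deltaA k A : ℤ)
        ≤ 2 * (2 * genus k w - 2) * degA d A := by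
      unfold ivio at h; linarith
    calc ((2 * D * wA k w A - (2 * genus k w - 2) * deltaA k A : ℤ) : ℚ)
        ≤ ((2 * (2 * genus k w - 2) * degA d A : ℤ) : ℚ) := by exact_mod_cast h2
      _ = (degA d A : ℚ) * ((2 * (2 * genus k w - 2) : ℤ) : ℚ) := by push_cast; ring
  · intro h
    have h2 : ((2 * D * wA k w A - (2 * genus k w - 2) * deltaA k A : ℤ) : ℚ)
        ≤ ((2 * (2 * genus k w - 2) * degA d A : ℤ) : ℚ) := by
      calc ((2 * D * wA k w A - (2 * genus k w - 2) * deltaA k A : ℤ) : ℚ)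
          ≤ (degA d A : ℚ) * ((2 * (2 * genus k w - 2) : ℤ) : ℚ) := h
        _ = ((2 * (2 * genus k w - 2) * degA d A : ℤ) : ℚ) := by push_cast; ring
    have h3 : (2 * D * wA k w A - (2 * genus k w - 2) * deltaA k A : ℤ)
        ≤ 2 * (2 * genus k w - 2) * degA d A := by exact_mod_cast h2
    unfold ivio; linarith

lemma isBalanced_iff (k : V → V → ℕ) (w : V → ℕ) (hg : 2 ≤ genus k w) (D : ℤ)
    (d : V → ℤ) :
    IsBalanced k w D d ↔ ((∑ v, d v) = D ∧ ∀ A, ivio k w D d A ≤ 0) := by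
  unfold IsBalanced
  constructor
  · rintro ⟨h1, h2⟩
    exact ⟨h1, fun A => (ivio_le_iff k w hg D d A).mpr (h2 A)⟩
  · rintro ⟨h1, h2⟩
    exact ⟨h1, fun A => (ivio_le_iff k w hg D d A).mp (h2 A)⟩

/-- The maximal violation. -/
def iMax (k : V → V → ℕ) (w : V → ℕ) (D : ℤ) (d : V → ℤ) : ℤ :=
  Finset.sup' Finset.univ ⟨∅, Finset.mem_univ ∅⟩ (ivio k w D d)

lemma le_iMax (k : V → V → ℕ) (w : V → ℕ) (D : ℤ) (d : V → ℤ) (A : Finset V) :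
    ivio k w D d A ≤ iMax k w D d :=
  Finset.le_sup' _ (Finset.mem_univ A)

lemma Ms_nonempty (k : V → V → ℕ) (w : V → ℕ) (D : ℤ) (d : V → ℤ) :
    (Finset.univ.filter (fun A => ivio k w D d A = iMax k w D d)).Nonempty := by
  obtain ⟨A, _, hA⟩ := Finset.exists_mem_eq_sup' (⟨∅, Finset.mem_univ ∅⟩ :
    (Finset.univ : Finset (Finset V)).Nonempty) (ivio k w D d)
  exact ⟨A, Finset.mem_filter.mpr ⟨Finset.mem_univ _, hA.symm⟩⟩

/-- Max cardinality among maximizers. -/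
def mcval (k : V → V → ℕ) (w : V → ℕ) (D : ℤ) (d : V → ℤ) : ℕ :=
  ((Finset.univ.filter (fun A => ivio k w D d A = iMax k w D d)).image
    Finset.card).max' ((Ms_nonempty k w D d).image _)

lemma exists_max_maximizer (k : V → V → ℕ) (w : V → ℕ) (D : ℤ) (d : V → ℤ) :
    ∃ A, ivio k w D d A = iMax k w D d ∧ A.card = mcval k w D d := by
  have h := Finset.max'_mem _ ((Ms_nonempty k w D d).image Finset.card)
  rw [Finset.mem_image] at h
  obtain ⟨A, hA, hc⟩ := h
  rw [Finset.mem_filter] at hA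
  exact ⟨A, hA.2, hc⟩

lemma card_le_mcval (k : V → V → ℕ) (w : V → ℕ) (D : ℤ) (d : V → ℤ) (A : Finset V)
    (hA : ivio k w D d A = iMax k w D d) : A.card ≤ mcval k w D d := by
  have hmem : A ∈ Finset.univ.filter (fun B => ivio k w D d B = iMax k w D d) :=
    Finset.mem_filter.mpr ⟨Finset.mem_univ A, hA⟩
  unfold mcval
  exact Finset.le_max' _ A.card (Finset.mem_image_of_mem Finset.card hmem)

lemma mcval_le_card (k : V → V → ℕ) (w : V → ℕ) (D : ℤ) (d : V → ℤ) :
    mcval k w D d ≤ Fintype.card V := by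
  obtain ⟨A, _, hc⟩ := exists_max_maximizer k w D d
  rw [← hc, ← Finset.card_univ]
  exact Finset.card_le_univ A

/-- The descent measure. -/
def muv (k : V → V → ℕ) (w : V → ℕ) (D : ℤ) (d : V → ℤ) : ℕ :=
  (iMax k w D d).toNat * (Fintype.card V + 1) + mcval k w D d

/-- Main descent: every multidegree can be corrected by `Λ` to a balanced one. -/
lemma descent (k : V → V → ℕ) (w : V → ℕ) (hsym : ∀ u v, k u v = k v u)
    (hconn : (graphOf k).Connected) (hg : 2 ≤ genus k w) (D : ℤ) :
    ∀ (N : ℕ) (d : V → ℤ), muv k w D d ≤ N → (∑ v, d v) = D →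
      ∃ d', (∑ v, d' v) = D ∧ (d' - d) ∈ Lambda k ∧ ∀ A, ivio k w D d' A ≤ 0 := by
  intro N
  induction N using Nat.strong_induction_on with
  | _ N ih =>
  intro d hmu hsum
  by_cases h0 : iMax k w D d ≤ 0
  · refine ⟨d, hsum, ?_, fun A => (le_iMax k w D d A).trans h0⟩
    rw [sub_self]
    exact (Lambda k).zero_mem
  push_neg at h0
  set tg : ℤ := 2 * genus k w - 2 with htgdef
  have htg : 2 ≤ tg := by omega
  obtain ⟨A, hAmax, hAcard⟩ := exists_max_maximizer k w D d
  have hivio_empty : ivio k w D d ∅ = 0 := by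
    unfold ivio
    rw [wA_empty, deltaA_empty, degA_empty]
    ring
  have hivio_univ : ivio k w D d Finset.univ = 0 := by
    unfold ivio
    rw [wA_univ k w hsym, deltaA_univ]
    have hDeg : degA d Finset.univ = D := hsum
    rw [hDeg]
    ring
  have hAne : A ≠ ∅ := by
    intro h; rw [h, hivio_empty] at hAmax; omega
  have hAuniv : A ≠ Finset.univ := by
    intro h; rw [h, hivio_univ] at hAmax; omega
  have hdelta : 1 ≤ deltaA k A :=
    one_le_deltaA k hsym hconn (Finset.nonempty_iff_ne_empty.mpr hAne) hAuniv
  set d' : V → ℤ := fun v => d v - ∑ a ∈ A, cvec k a v with hd'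
  have hsum' : (∑ v, d' v) = D := by
    simp only [hd']
    rw [Finset.sum_sub_distrib, hsum, Finset.sum_comm]
    rw [Finset.sum_eq_zero fun a _ => sum_cvec_coords k a, sub_zero]
  have hmem : (d' - d) ∈ Lambda k := by
    have heq : d' - d = -(∑ a ∈ A, cvec k a) := by
      funext v
      simp [hd', Finset.sum_apply]
    rw [heq]
    exact neg_mem (AddSubgroup.sum_mem _ fun a _ =>
      AddSubgroup.subset_closure ⟨a, rfl⟩)
  have hdeg' : ∀ B, degA d' B
      = degA d B - (EEI k B A - EEI k (A ∩ B) Finset.univ) := by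
    intro B
    unfold degA
    simp only [hd']
    rw [Finset.sum_sub_distrib, sum_cvec_pair k hsym A B]
  have hEEsw : ∀ B : Finset V, EEI k B A - EEI k (A ∩ B) Finset.univ
      = EEI k (A \ B) (B \ A) - EEI k (A ∩ B) ((A ∪ B)ᶜ) := by
    intro B
    have h1 : EEI k B A - EEI k (A ∩ B) Finset.univ
        = SK k (fun u v => indI B u * indI A v - indI (A ∩ B) u * indI Finset.univ v) := by
      rw [SK_sub]; rfl
    have h2 : EEI k (A \ B) (B \ A) - EEI k (A ∩ B) ((A ∪ B)ᶜ)
        = SK k (fun u v => indI (A \ B) u * indI (B \ A) v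
            - indI (A ∩ B) u * indI ((A ∪ B)ᶜ) v) := by
      rw [SK_sub]; rfl
    rw [h1, h2]
    refine SK_congr k hsym _ _ fun u v => ?_
    simp only [indI_union, indI_inter, indI_sdiff, indI_compl, indI_univ]
    ring
  have hkey : ∀ B, ivio k w D d' B
      = ivio k w D d (A ∪ B) + ivio k w D d (A ∩ B) - ivio k w D d A
        - 2 * tg * EEI k (A ∩ B) ((A ∪ B)ᶜ) := by
    intro B
    have e1 : ivio k w D d' B = ivio k w D d B
        + 2 * tg * (EEI k (A \ B) (B \ A) - EEI k (A ∩ B) ((A ∪ B)ᶜ)) := by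
      unfold ivio
      rw [hdeg' B, hEEsw B, ← htgdef]
      ring
    have e2 : ivio k w D d (A ∪ B) + ivio k w D d (A ∩ B)
        = ivio k w D d A + ivio k w D d B + 2 * tg * EEI k (A \ B) (B \ A) := by
      unfold ivio
      rw [← htgdef]
      have hw := wA_union_inter k w A B
      have hd := degA_union_inter d A B
      have hdel := deltaA_union_inter k hsym A B
      linear_combination (2 * D) * hw - tg * hdel - 2 * tg * hd
    linarith [e1, e2]
  have hbound : ∀ B, ivio k w D d' B ≤ iMax k w D d := by
    intro B
    have h1 := le_iMax k w D d (A ∪ B)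
    have h2 := le_iMax k w D d (A ∩ B)
    have h3 := EEI_nonneg k (A ∩ B) ((A ∪ B)ᶜ)
    have h4 : (0 : ℤ) ≤ 2 * tg * EEI k (A ∩ B) ((A ∪ B)ᶜ) :=
      mul_nonneg (by linarith) h3
    linarith [hkey B, hAmax]
  have hselfA : ivio k w D d' A = iMax k w D d - 2 * tg * deltaA k A := by
    have h := hkey A
    rw [Finset.union_self, Finset.inter_self] at h
    rw [h, hAmax, deltaA_eq_EEI]
    ring
  have hEqCase : ∀ B, ivio k w D d' B = iMax k w D d → B ⊆ A ∧ B ≠ A := by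
    intro B hB
    have h1 := le_iMax k w D d (A ∪ B)
    have h2 := le_iMax k w D d (A ∩ B)
    have h3 := EEI_nonneg k (A ∩ B) ((A ∪ B)ᶜ)
    have h4 : (0 : ℤ) ≤ 2 * tg * EEI k (A ∩ B) ((A ∪ B)ᶜ) :=
      mul_nonneg (by linarith) h3
    have hk2 := hkey B
    have hU : ivio k w D d (A ∪ B) = iMax k w D d :=
      le_antisymm h1 (by linarith [hAmax])
    have hsub : B ⊆ A := by
      have hcard : (A ∪ B).card ≤ A.card := by
        rw [hAcard]
        exact card_le_mcval k w D d _ hU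
      have heq := Finset.eq_of_subset_of_card_le Finset.subset_union_left hcard
      exact Finset.union_eq_left.mp heq.symm
    have hne : B ≠ A := by
      intro h
      rw [h, hselfA] at hB
      nlinarith [htg, hdelta]
    exact ⟨hsub, hne⟩
  have hlt : muv k w D d' < muv k w D d := by
    have hle : iMax k w D d' ≤ iMax k w D d := by
      obtain ⟨B, _, hB⟩ := Finset.exists_mem_eq_sup' (⟨∅, Finset.mem_univ ∅⟩ :
        (Finset.univ : Finset (Finset V)).Nonempty) (ivio k w D d')
      rw [show iMax k w D d' = ivio k w D d' B from hB]
      exact hbound B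
    rcases lt_or_eq_of_le hle with hlt2 | heq2
    · have hm' := mcval_le_card k w D d'
      unfold muv
      have h1 : (iMax k w D d').toNat < (iMax k w D d).toNat ∨ iMax k w D d' ≤ 0 := by
        omega
      rcases h1 with h1 | h1
      · have := mcval_le_card k w D d
        nlinarith [h1, hm']
      · have h2 : (iMax k w D d').toNat = 0 := by omega
        rw [h2]
        have h3 : 1 ≤ (iMax k w D d).toNat := by omega
        nlinarith [hm']
    · obtain ⟨B, hBmax, hBcard⟩ := exists_max_maximizer k w D d'
      have hBeq : ivio k w D d' B = iMax k w D d := by rw [hBmax, heq2]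
      obtain ⟨hsub, hne⟩ := hEqCase B hBeq
      have hcard : B.card < A.card :=
        Finset.card_lt_card (lt_of_le_of_ne hsub hne)
      unfold muv
      rw [heq2]
      have : mcval k w D d' < mcval k w D d := by
        rw [← hBcard, ← hAcard]
        exact hcard
      omega
  obtain ⟨d'', hsum'', hmem'', hbal''⟩ :=
    ih (muv k w D d') (by omega) d' le_rfl hsum'
  refine ⟨d'', hsum'', ?_, hbal''⟩
  have : d'' - d = (d'' - d') + (d' - d) := by ring
  rw [this]
  exact add_mem hmem'' hmem

/-- Every class of total degree `D` contains a balanced multidegree. -/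
lemma exists_balanced_in_class (k : V → V → ℕ) (w : V → ℕ)
    (hsym : ∀ u v, k u v = k v u) (hconn : (graphOf k).Connected)
    (hg : 2 ≤ genus k w) (D : ℤ) (d0 : V → ℤ) (hsum0 : (∑ v, d0 v) = D) :
    ∃ d, IsBalanced k w D d ∧ d - d0 ∈ Lambda k := by
  obtain ⟨d', h1, h2, h3⟩ := descent k w hsym hconn hg D (muv k w D d0) d0 le_rfl hsum0
  exact ⟨d', (isBalanced_iff k w hg D d').mpr ⟨h1, h3⟩, h2⟩
lemma Lambda_mem_rep (k : V → V → ℕ) {z : V → ℤ} (hz : z ∈ Lambda k) :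
    ∃ n : V → ℤ, (∑ a, n a • cvec k a) = z := by
  have h : z ∈ Submodule.span ℤ (Set.range (cvec k)) := by
    have := Submodule.span_int_eq_addSubgroupClosure (Set.range (cvec k))
    unfold Lambda at hz
    rw [← this] at hz
    exact hz
  exact (Submodule.mem_span_range_iff_exists_fun ℤ).mp h

lemma weighted_fire (k : V → V → ℕ) (hsym : ∀ u v, k u v = k v u) (n : V → ℤ)
    (A : Finset V) :
    (∑ v ∈ A, ∑ a, n a * cvec k a v)
      = ∑ a ∈ Aᶜ, ∑ v ∈ A, (n a - n v) * kzI k v a := by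
  have h1 : (∑ v ∈ A, ∑ a, n a * cvec k a v)
      = (∑ v ∈ A, ∑ a, n a * kzI k v a) - ∑ v ∈ A, n v * ∑ x, kzI k x v := by
    rw [← Finset.sum_sub_distrib]
    refine Finset.sum_congr rfl fun v _ => ?_
    have e1 : ∀ a, n a * cvec k a v
        = n a * kzI k v a - n a * (if v = a then ∑ x, kzI k x a else 0) := fun a => by
      rw [cvec_eq]; ring
    rw [Finset.sum_congr rfl fun a _ => e1 a, Finset.sum_sub_distrib]
    congr 1
    have e2 : ∀ a, n a * (if v = a then ∑ x, kzI k x a else 0)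
        = (if v = a then n a * ∑ x, kzI k x a else 0) := fun a => by split <;> ring
    rw [Finset.sum_congr rfl fun a _ => e2 a,
      Finset.sum_ite_eq Finset.univ v (fun a => n a * ∑ x, kzI k x a)]
    simp
  have h2 : (∑ v ∈ A, ∑ a, n a * kzI k v a)
      = (∑ v ∈ A, ∑ a ∈ A, n a * kzI k v a) + ∑ v ∈ A, ∑ a ∈ Aᶜ, n a * kzI k v a := by
    rw [← Finset.sum_add_distrib]
    exact Finset.sum_congr rfl fun v _ => (Finset.sum_add_sum_compl A _).symm
  have h3 : (∑ v ∈ A, n v * ∑ x, kzI k x v)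
      = (∑ v ∈ A, ∑ x ∈ A, n v * kzI k x v) + ∑ v ∈ A, ∑ x ∈ Aᶜ, n v * kzI k x v := by
    rw [← Finset.sum_add_distrib]
    refine Finset.sum_congr rfl fun v _ => ?_
    rw [← Finset.sum_add_sum_compl A (fun x => kzI k x v), mul_add,
      Finset.mul_sum, Finset.mul_sum]
  have hcancel : (∑ v ∈ A, ∑ a ∈ A, n a * kzI k v a)
      = ∑ v ∈ A, ∑ x ∈ A, n v * kzI k x v := Finset.sum_comm
  have h4 : (∑ v ∈ A, ∑ a ∈ Aᶜ, n a * kzI k v a)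
      = ∑ a ∈ Aᶜ, ∑ v ∈ A, n a * kzI k v a := Finset.sum_comm
  have h5 : (∑ v ∈ A, ∑ x ∈ Aᶜ, n v * kzI k x v)
      = ∑ a ∈ Aᶜ, ∑ v ∈ A, n v * kzI k v a := by
    rw [Finset.sum_comm]
    exact Finset.sum_congr rfl fun a _ => Finset.sum_congr rfl fun v _ => by
      rw [kzI_symm k hsym]
  rw [h1, h2, h3, hcancel, h4, h5, add_sub_add_left_eq_sub, ← Finset.sum_sub_distrib]
  refine Finset.sum_congr rfl fun a _ => ?_
  rw [← Finset.sum_sub_distrib]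
  exact Finset.sum_congr rfl fun v _ => by ring

lemma strictly_balanced_unique (k : V → V → ℕ) (w : V → ℕ)
    (hsym : ∀ u v, k u v = k v u) (hg : 2 ≤ genus k w) (D : ℤ) {d d' : V → ℤ}
    (hd : IsStrictlyBalanced k w D d) (hd' : IsStrictlyBalanced k w D d')
    (hmem : d - d' ∈ Lambda k) : d = d' := by
  by_contra hne
  obtain ⟨n, hn⟩ := Lambda_mem_rep k hmem
  have hnc : ∃ u v, n u ≠ n v := by
    by_contra hc
    push_neg at hc
    apply hne
    have hzero : d - d' = 0 := by
      rw [← hn]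
      funext u
      rw [Finset.sum_apply]
      have e1 : ∀ a, (n a • cvec k a) u = n u * cvec k a u := fun a => by
        rw [Pi.smul_apply, smul_eq_mul, hc a u]
      rw [Finset.sum_congr rfl fun a _ => e1 a, ← Finset.mul_sum,
        sum_cvec_gens k hsym, mul_zero]
      rfl
    exact sub_eq_zero.mp hzero
  obtain ⟨u0, v0, huv⟩ := hnc
  have hVne : (Finset.univ : Finset V).Nonempty := ⟨u0, Finset.mem_univ u0⟩
  set M := (Finset.univ.image n).max' (hVne.image n) with hMdef
  set A := Finset.univ.filter (fun v => n v = M) with hAdef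
  have hle : ∀ v, n v ≤ M := fun v =>
    Finset.le_max' _ _ (Finset.mem_image_of_mem n (Finset.mem_univ v))
  have hAmem : ∀ v, v ∈ A ↔ n v = M := fun v => by rw [hAdef]; simp
  have hAne : A.Nonempty := by
    obtain ⟨x, _, hxe⟩ := Finset.mem_image.mp (Finset.max'_mem _ (hVne.image n))
    exact ⟨x, (hAmem x).mpr hxe⟩
  have hAuniv : A ≠ Finset.univ := by
    intro h
    have h1 : n u0 = M := (hAmem u0).mp (h ▸ Finset.mem_univ u0)
    have h2 : n v0 = M := (hAmem v0).mp (h ▸ Finset.mem_univ v0)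
    exact huv (h1.trans h2.symm)
  -- the key estimate : degA d A - degA d' A ≤ - deltaA k A
  have hlam : degA d A - degA d' A ≤ - deltaA k A := by
    have e1 : degA d A - degA d' A = ∑ v ∈ A, (d v - d' v) := by
      unfold degA; rw [← Finset.sum_sub_distrib]
    have e2 : ∀ v, d v - d' v = ∑ a, n a * cvec k a v := by
      intro v
      have hfv := congrFun hn v
      rw [Finset.sum_apply] at hfv
      have : (∑ a, (n a • cvec k a) v) = ∑ a, n a * cvec k a v :=
        Finset.sum_congr rfl fun a _ => by rw [Pi.smul_apply, smul_eq_mul]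
      rw [this] at hfv
      rw [show d v - d' v = (d - d') v from rfl]
      exact hfv.symm
    rw [e1, Finset.sum_congr rfl fun v _ => e2 v, weighted_fire k hsym n A]
    have hbnd : ∀ a ∈ Aᶜ, ∀ v ∈ A, (n a - n v) * kzI k v a ≤ - kzI k v a := by
      intro a ha v hv
      have h1 : n a ≤ M - 1 := by
        have h2 : n a ≠ M := fun h => (Finset.mem_compl.mp ha) ((hAmem a).mpr h)
        have := hle a
        omega
      have h3 : n v = M := (hAmem v).mp hv
      have h4 : n a - n v ≤ -1 := by omega
      nlinarith [kzI_nonneg k v a]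
    calc (∑ a ∈ Aᶜ, ∑ v ∈ A, (n a - n v) * kzI k v a)
        ≤ ∑ a ∈ Aᶜ, ∑ v ∈ A, (- kzI k v a) := by
          refine Finset.sum_le_sum fun a ha => Finset.sum_le_sum fun v hv => ?_
          exact hbnd a ha v hv
      _ = - deltaA k A := by
          have e : (∑ a ∈ Aᶜ, ∑ v ∈ A, (- kzI k v a))
              = - ∑ a ∈ Aᶜ, ∑ v ∈ A, kzI k v a := by
            simp [Finset.sum_neg_distrib]
          rw [e, neg_inj, deltaA_eq_EEI, EEI_eq_sum]
          exact Finset.sum_comm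
  -- the m_A + m_{Aᶜ} identity
  have hwsum : wA k w A + wA k w Aᶜ = 2 * genus k w - 2 := by
    rw [← wA_univ k w hsym]
    unfold wA
    exact Finset.sum_add_sum_compl A _
  have hQne : ((2 * genus k w - 2 : ℤ) : ℚ) ≠ 0 := by
    have : (2 * genus k w - 2 : ℤ) ≠ 0 := by omega
    exact_mod_cast this
  have hmsum : mA k w D A + mA k w D Aᶜ = (D : ℚ) - (deltaA k A : ℚ) := by
    unfold mA
    rw [deltaA_compl k hsym]
    have hwQ : ((wA k w A : ℤ) : ℚ) + ((wA k w Aᶜ : ℤ) : ℚ)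
        = ((2 * genus k w - 2 : ℤ) : ℚ) := by exact_mod_cast hwsum
    have h1 : (D : ℚ) * (wA k w A : ℚ) / ((2 * genus k w - 2 : ℤ) : ℚ)
        + (D : ℚ) * (wA k w Aᶜ : ℚ) / ((2 * genus k w - 2 : ℤ) : ℚ) = (D : ℚ) := by
      rw [← add_div, ← mul_add, hwQ, mul_div_assoc, div_self hQne, mul_one]
    linarith [h1]
  -- strict balance of d' on Aᶜ
  have hc1 : Aᶜ ≠ ∅ := by
    intro h
    apply hAuniv
    rwa [Finset.compl_eq_empty_iff] at h
  have hc2 : Aᶜ ≠ Finset.univ := by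
    intro h
    obtain ⟨a, ha⟩ := hAne
    have : a ∈ Aᶜ := h ▸ Finset.mem_univ a
    exact (Finset.mem_compl.mp this) ha
  have hstr' : mA k w D Aᶜ < (degA d' Aᶜ : ℚ) := hd'.2 Aᶜ hc1 hc2
  have hbal : mA k w D A ≤ (degA d A : ℚ) := hd.1.2 A
  have hsplit' : (degA d' A : ℚ) + (degA d' Aᶜ : ℚ) = (D : ℚ) := by
    have h1 : degA d' A + degA d' Aᶜ = D := by
      have h2 := hd'.1.1
      unfold degA at h2 ⊢
      rw [Finset.sum_add_sum_compl A d']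
      exact h2
    exact_mod_cast h1
  have hlamQ : (degA d A : ℚ) ≤ (degA d' A : ℚ) - (deltaA k A : ℚ) := by
    have : degA d A ≤ degA d' A - deltaA k A := by linarith [hlam]
    exact_mod_cast this
  linarith [hbal, hstr', hmsum, hsplit', hlamQ]
/-- The generators over `ℚ`. -/
def cQ (k : V → V → ℕ) : V → (V → ℚ) := fun a u => ((cvec k a u : ℤ) : ℚ)

/-- The off-diagonal kernel over `ℚ`. -/
def kq (k : V → V → ℕ) : V → V → ℚ := fun u v => ((kzI k u v : ℤ) : ℚ)

/-- The Laplacian-type map over `ℚ`. -/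
noncomputable def Lmap (k : V → V → ℕ) : (V → ℚ) →ₗ[ℚ] (V → ℚ) :=
  Fintype.linearCombination ℚ (cQ k)

/-- The coordinate-sum functional over `ℚ`. -/
def sumQ (V : Type) [Fintype V] : (V → ℚ) →ₗ[ℚ] ℚ where
  toFun := fun x => ∑ v, x v
  map_add' := fun a b => by simp [Finset.sum_add_distrib]
  map_smul' := fun c a => by simp [Finset.mul_sum]

lemma cQ_eq (k : V → V → ℕ) (a u : V) :
    cQ k a u = kq k u a - (if u = a then ∑ x, kq k x a else 0) := by
  unfold cQ kq
  rw [cvec_eq k a u]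
  by_cases h : u = a
  · rw [if_pos h, if_pos h]
    push_cast
    ring
  · rw [if_neg h, if_neg h]
    push_cast
    ring

lemma Lmap_apply (k : V → V → ℕ) (x : V → ℚ) (u : V) :
    Lmap k x u = (∑ a, x a * kq k u a) - x u * ∑ b, kq k b u := by
  have h1 : Lmap k x u = ∑ a, x a * cQ k a u := by
    unfold Lmap
    rw [Fintype.linearCombination_apply]
    rw [Finset.sum_apply]
    rfl
  rw [h1]
  have h2 : ∀ a, x a * cQ k a u
      = x a * kq k u a - (if u = a then x a * ∑ b, kq k b a else 0) := by
    intro a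
    rw [cQ_eq]
    split <;> ring
  rw [Finset.sum_congr rfl fun a _ => h2 a, Finset.sum_sub_distrib]
  congr 1
  rw [Finset.sum_ite_eq Finset.univ u (fun a => x a * ∑ b, kq k b a)]
  simp

lemma kq_nonneg (k : V → V → ℕ) (u v : V) : 0 ≤ kq k u v := by
  unfold kq; exact_mod_cast kzI_nonneg k u v

lemma kq_symm (k : V → V → ℕ) (hsym : ∀ u v, k u v = k v u) (u v : V) :
    kq k u v = kq k v u := by
  unfold kq; exact_mod_cast kzI_symm k hsym u v

/-- Kernel elements are constant on edges. -/
lemma ker_constant_on_edges (k : V → V → ℕ) (hsym : ∀ u v, k u v = k v u)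
    (x : V → ℚ) (hx : Lmap k x = 0) :
    ∀ u v, (graphOf k).Adj u v → x u = x v := by
  have hL : ∀ u, (∑ a, x a * kq k u a) = x u * ∑ b, kq k b u := by
    intro u
    have := congrFun hx u
    rw [Lmap_apply] at this
    have h0 : (0 : V → ℚ) u = 0 := rfl
    rw [h0] at this
    linarith [this]
  have hquad : (∑ u, ∑ v, kq k u v * (x u - x v) ^ 2) = 0 := by
    have e3 : ∀ u, (∑ v, x v * kq k u v) = x u * ∑ b, kq k b u := by
      intro u
      rw [← hL u]
    have hexpand : (∑ u, ∑ v, kq k u v * (x u - x v) ^ 2)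
        = (∑ u, ∑ v, kq k u v * x u ^ 2)
          - 2 * (∑ u, x u * ∑ v, x v * kq k u v)
          + ∑ u, ∑ v, kq k u v * x v ^ 2 := by
      have per : ∀ u, (∑ v, kq k u v * (x u - x v) ^ 2)
          = (∑ v, kq k u v * x u ^ 2) - 2 * (x u * ∑ v, x v * kq k u v)
            + ∑ v, kq k u v * x v ^ 2 := by
        intro u
        rw [Finset.mul_sum, Finset.mul_sum, ← Finset.sum_sub_distrib,
          ← Finset.sum_add_distrib]
        exact Finset.sum_congr rfl fun v _ => by ring
      calc (∑ u, ∑ v, kq k u v * (x u - x v) ^ 2)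
          = ∑ u, ((∑ v, kq k u v * x u ^ 2) - 2 * (x u * ∑ v, x v * kq k u v)
            + ∑ v, kq k u v * x v ^ 2) := Finset.sum_congr rfl fun u _ => per u
        _ = _ := by
            rw [Finset.sum_add_distrib, Finset.sum_sub_distrib, ← Finset.mul_sum]
    have hS1 : (∑ u, ∑ v, kq k u v * x u ^ 2) = ∑ u, x u ^ 2 * ∑ b, kq k b u := by
      refine Finset.sum_congr rfl fun u _ => ?_
      rw [← Finset.sum_mul,
        show (∑ v, kq k u v) = ∑ b, kq k b u from
          Finset.sum_congr rfl fun v _ => kq_symm k hsym u v]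
      ring
    have hS3 : (∑ u, ∑ v, kq k u v * x v ^ 2) = ∑ u, x u ^ 2 * ∑ b, kq k b u := by
      rw [Finset.sum_comm]
      refine Finset.sum_congr rfl fun v _ => ?_
      rw [← Finset.sum_mul]
      ring
    have hS2 : (∑ u, x u * ∑ v, x v * kq k u v) = ∑ u, x u ^ 2 * ∑ b, kq k b u := by
      refine Finset.sum_congr rfl fun u _ => ?_
      rw [e3 u]
      ring
    rw [hexpand, hS1, hS2, hS3]
    ring
  intro u v hadj
  have hterm : ∀ u' ∈ (Finset.univ : Finset V), ∀ v' ∈ (Finset.univ : Finset V),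
      0 ≤ kq k u' v' * (x u' - x v') ^ 2 := fun u' _ v' _ =>
    mul_nonneg (kq_nonneg k u' v') (sq_nonneg _)
  have hzero : kq k u v * (x u - x v) ^ 2 = 0 := by
    have houter : ∀ u' ∈ (Finset.univ : Finset V),
        0 ≤ ∑ v', kq k u' v' * (x u' - x v') ^ 2 := fun u' hu' =>
      Finset.sum_nonneg fun v' hv' => hterm u' hu' v' hv'
    have h1 := (Finset.sum_eq_zero_iff_of_nonneg houter).mp hquad u (Finset.mem_univ u)
    exact (Finset.sum_eq_zero_iff_of_nonneg fun v' hv' =>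
      hterm u (Finset.mem_univ u) v' hv').mp h1 v (Finset.mem_univ v)
  have hkpos : 0 < kq k u v := by
    have h1 : 0 < k u v := by
      rcases hadj.2 with h | h
      · exact h
      · rw [hsym]; exact h
    unfold kq kzI
    rw [if_neg hadj.1]
    exact_mod_cast h1
  have := mul_eq_zero.mp hzero
  rcases this with h | h
  · exact absurd h (ne_of_gt hkpos)
  · have := sq_eq_zero_iff.mp h
    linarith [this]

lemma constant_of_connected (k : V → V → ℕ) (hconn : (graphOf k).Connected)
    (x : V → ℚ) (h : ∀ u v, (graphOf k).Adj u v → x u = x v) :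
    ∀ u v, x u = x v := by
  intro u v
  obtain ⟨p⟩ := hconn.preconnected u v
  induction p with
  | nil => rfl
  | cons hadj q ih => exact (h _ _ hadj).trans ih

/-- Any integer vector of coordinate-sum zero has a positive multiple in `Λ`. -/
lemma exists_smul_mem_Lambda (k : V → V → ℕ) (hsym : ∀ u v, k u v = k v u)
    (hconn : (graphOf k).Connected) (z : V → ℤ) (hz : (∑ v, z v) = 0) :
    ∃ N : ℕ, 0 < N ∧ (N : ℤ) • z ∈ Lambda k := by
  have hne : Nonempty V := hconn.nonempty
  obtain ⟨v₀⟩ := hne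
  -- the kernel of Lmap is the constants
  have hker : LinearMap.ker (Lmap k) = Submodule.span ℚ {(1 : V → ℚ)} := by
    apply le_antisymm
    · intro x hx
      rw [LinearMap.mem_ker] at hx
      have hconst := constant_of_connected k hconn x
        (ker_constant_on_edges k hsym x hx)
      rw [Submodule.mem_span_singleton]
      exact ⟨x v₀, by funext u; rw [Pi.smul_apply, Pi.one_apply, smul_eq_mul,
        mul_one, hconst v₀ u]⟩
    · rw [Submodule.span_singleton_le_iff_mem, LinearMap.mem_ker]
      funext u
      rw [Lmap_apply]
      show (∑ a, (1 : V → ℚ) a * kq k u a) - (1 : V → ℚ) u * (∑ b, kq k b u) = (0 : ℚ)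
      simp only [Pi.one_apply, one_mul]
      rw [sub_eq_zero]
      exact Finset.sum_congr rfl fun a _ => kq_symm k hsym u a
  have hone : (1 : V → ℚ) ≠ 0 := fun h => by
    have := congrFun h v₀
    norm_num at this
  have hcard : 0 < Fintype.card V := Fintype.card_pos_iff.mpr ⟨v₀⟩
  have hkrank : Module.finrank ℚ (LinearMap.ker (Lmap k)) = 1 := by
    rw [hker]
    exact finrank_span_singleton hone
  have hfr : Module.finrank ℚ (V → ℚ) = Fintype.card V := Module.finrank_pi ℚ
  have hLrank : Module.finrank ℚ (LinearMap.range (Lmap k))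
      = Fintype.card V - 1 := by
    have := LinearMap.finrank_range_add_finrank_ker (Lmap k)
    rw [hkrank, hfr] at this
    omega
  have hsurj : Function.Surjective (sumQ V) := by
    intro c
    refine ⟨fun u => if u = v₀ then c else 0, ?_⟩
    show (∑ u, if u = v₀ then c else 0) = c
    rw [Finset.sum_ite_eq' Finset.univ v₀ (fun _ => c)]
    simp
  have hZrank : Module.finrank ℚ (LinearMap.ker (sumQ V)) = Fintype.card V - 1 := by
    have h1 := LinearMap.finrank_range_add_finrank_ker (sumQ V)
    rw [hfr, LinearMap.range_eq_top.mpr hsurj] at h1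
    rw [finrank_top] at h1
    rw [Module.finrank_self] at h1
    omega
  have hle : LinearMap.range (Lmap k) ≤ LinearMap.ker (sumQ V) := by
    intro y hy
    rw [LinearMap.mem_range] at hy
    obtain ⟨x, rfl⟩ := hy
    rw [LinearMap.mem_ker]
    show (∑ u, Lmap k x u) = 0
    have h1 : ∀ u, Lmap k x u = ∑ a, x a * cQ k a u := by
      intro u
      unfold Lmap
      rw [Fintype.linearCombination_apply, Finset.sum_apply]
      rfl
    rw [Finset.sum_congr rfl fun u _ => h1 u, Finset.sum_comm]
    apply Finset.sum_eq_zero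
    intro a _
    rw [← Finset.mul_sum]
    have h2 : (∑ u, cQ k a u) = 0 := by
      unfold cQ
      rw [← Int.cast_sum, sum_cvec_coords k a]
      rfl
    rw [h2, mul_zero]
  have hrange : LinearMap.range (Lmap k) = LinearMap.ker (sumQ V) :=
    Submodule.eq_of_le_of_finrank_le hle (by rw [hZrank, hLrank])
  -- find rational coefficients
  have hzq : (fun v => ((z v : ℤ) : ℚ)) ∈ LinearMap.ker (sumQ V) := by
    rw [LinearMap.mem_ker]
    show (∑ v, ((z v : ℤ) : ℚ)) = 0
    rw [← Int.cast_sum, hz]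
    rfl
  rw [← hrange] at hzq
  obtain ⟨c, hc⟩ := hzq
  set N : ℕ := ∏ v, (c v).den with hN
  have hNpos : 0 < N := Finset.prod_pos fun v _ => (c v).pos
  refine ⟨N, hNpos, ?_⟩
  have hm : ∀ a, (((N / (c a).den : ℕ) * (c a).num : ℤ) : ℚ) = (N : ℚ) * c a := by
    intro a
    have hdvd : (c a).den ∣ N := Finset.dvd_prod_of_mem _ (Finset.mem_univ a)
    have hdQ : (((c a).den : ℕ) : ℚ) ≠ 0 := by
      exact_mod_cast (c a).den_nz
    have hcast : ((N / (c a).den : ℕ) : ℚ) = (N : ℚ) / ((c a).den : ℚ) :=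
      Nat.cast_div hdvd hdQ
    rw [Int.cast_mul, Int.cast_natCast, hcast, div_mul_eq_mul_div, mul_div_assoc,
      Rat.num_div_den]
  have hkeyeq : (N : ℤ) • z = ∑ a, ((N / (c a).den : ℕ) * (c a).num : ℤ) • cvec k a := by
    funext u
    apply (Int.cast_injective (α := ℚ))
    have hLu : Lmap k c u = ((z u : ℤ) : ℚ) := congrFun hc u
    have h1 : Lmap k c u = ∑ a, c a * cQ k a u := by
      unfold Lmap
      rw [Fintype.linearCombination_apply, Finset.sum_apply]
      rfl
    have h2 : (((∑ a, ((N / (c a).den : ℕ) * (c a).num : ℤ) • cvec k a) u : ℤ) : ℚ)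
        = ∑ a, ((N : ℚ) * c a) * cQ k a u := by
      rw [Finset.sum_apply]
      rw [Int.cast_sum]
      refine Finset.sum_congr rfl fun a _ => ?_
      rw [Pi.smul_apply, smul_eq_mul]
      push_cast
      rw [← hm a]
      push_cast
      unfold cQ
      ring
    rw [h2]
    have h3 : (((N : ℤ) • z) u : ℚ) = (N : ℚ) * ((z u : ℤ) : ℚ) := by
      rw [Pi.smul_apply, smul_eq_mul]
      push_cast
      ring
    rw [h3, ← hLu, h1, Finset.mul_sum]
    exact Finset.sum_congr rfl fun a _ => by ring
  rw [hkeyeq]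
  exact AddSubgroup.sum_mem _ fun a _ =>
    AddSubgroup.zsmul_mem _ (AddSubgroup.subset_closure (Set.mem_range_self a)) _
/-- The difference basis vectors of `Z`. -/
def bvec (v₀ v : V) : V → ℤ := fun u => (if u = v then 1 else 0) - (if u = v₀ then 1 else 0)

lemma bvec_sum (v₀ v : V) : (∑ u, bvec v₀ v u) = 0 := by
  unfold bvec
  rw [Finset.sum_sub_distrib]
  rw [Finset.sum_ite_eq' Finset.univ v (fun _ => (1 : ℤ)),
    Finset.sum_ite_eq' Finset.univ v₀ (fun _ => (1 : ℤ))]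
  simp

lemma zsub_decomp (v₀ : V) (z : V → ℤ) (hz : (∑ v, z v) = 0) :
    (∑ v, z v • bvec v₀ v) = z := by
  funext u
  rw [Finset.sum_apply]
  have e1 : ∀ v, (z v • bvec v₀ v) u
      = z v * (if u = v then 1 else 0) - z v * (if u = v₀ then 1 else 0) := by
    intro v
    rw [Pi.smul_apply, smul_eq_mul]
    unfold bvec
    ring
  rw [Finset.sum_congr rfl fun v _ => e1 v, Finset.sum_sub_distrib]
  have e2 : (∑ v, z v * (if u = v then 1 else 0)) = z u := by
    have : ∀ v, z v * (if u = v then 1 else 0) = (if u = v then z v else 0) := by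
      intro v; split <;> ring
    rw [Finset.sum_congr rfl fun v _ => this v,
      Finset.sum_ite_eq Finset.univ u z]
    simp
  have e3 : (∑ v, z v * (if u = v₀ then 1 else 0)) = (if u = v₀ then 1 else 0) * ∑ v, z v := by
    rw [← Finset.sum_mul, mul_comm]
  rw [e2, e3, hz, mul_zero, sub_zero]

lemma bvec_mem_Zsub (v₀ v : V) : bvec v₀ v ∈ Zsub V := by
  show bvec v₀ v ∈ (sumHom V).ker
  rw [AddMonoidHom.mem_ker]
  exact bvec_sum v₀ v

/-- The degree class group is finite. -/
lemma finite_degree_class_group (k : V → V → ℕ) (hsym : ∀ u v, k u v = k v u)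
    (hconn : (graphOf k).Connected) :
    Finite (↥(Zsub V) ⧸ (Lambda k).addSubgroupOf (Zsub V)) := by
  have hne : Nonempty V := hconn.nonempty
  obtain ⟨v₀⟩ := hne
  choose Nf hNf hNmem using fun v =>
    exists_smul_mem_Lambda k hsym hconn (bvec v₀ v) (bvec_sum v₀ v)
  set N : ℕ := ∏ v, Nf v with hNdef
  have hNpos : 0 < N := Finset.prod_pos fun v _ => hNf v
  have hkill : ∀ v : V, ((N : ℤ)) • bvec v₀ v ∈ Lambda k := by
    intro v
    obtain ⟨t, ht⟩ : Nf v ∣ N := Finset.dvd_prod_of_mem _ (Finset.mem_univ v)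
    have hcast : ((N : ℕ) : ℤ) = (t : ℤ) * (Nf v : ℤ) := by
      rw [ht]; push_cast; ring
    rw [hcast, mul_smul]
    exact AddSubgroup.zsmul_mem _ (hNmem v) _
  set H := (Lambda k).addSubgroupOf (Zsub V) with hHdef
  refine Finite.of_surjective
    (fun (a : V → Fin N) =>
      (QuotientAddGroup.mk (∑ v, ((a v : ℕ) : ℤ) • (⟨bvec v₀ v, bvec_mem_Zsub v₀ v⟩ : Zsub V))
        : ↥(Zsub V) ⧸ H)) ?_
  intro x
  induction x using QuotientAddGroup.induction_on with
  | H ζ =>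
  obtain ⟨z, hz⟩ := ζ
  have hzz : (∑ v, z v) = 0 := by
    have := hz
    rw [show Zsub V = (sumHom V).ker from rfl, AddMonoidHom.mem_ker] at this
    exact this
  have hNne : (N : ℤ) ≠ 0 := by exact_mod_cast Nat.pos_iff_ne_zero.mp hNpos
  have hNposZ : (0 : ℤ) < (N : ℤ) := by exact_mod_cast hNpos
  refine ⟨fun v => ⟨(z v % (N : ℤ)).toNat, ?_⟩, ?_⟩
  · have h1 := Int.emod_nonneg (z v) hNne
    have h2 := Int.emod_lt_of_pos (z v) hNposZ
    omega
  · rw [QuotientAddGroup.eq]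
    rw [AddSubgroup.mem_addSubgroupOf]
    have hr : ∀ v : V, (((z v % (N : ℤ)).toNat : ℕ) : ℤ) = z v % (N : ℤ) := fun v =>
      Int.toNat_of_nonneg (Int.emod_nonneg (z v) hNne)
    have hcoe : ((-(∑ v, (((z v % (N : ℤ)).toNat : ℕ) : ℤ) •
          (⟨bvec v₀ v, bvec_mem_Zsub v₀ v⟩ : Zsub V)) + ⟨z, hz⟩ : Zsub V) : V → ℤ)
        = -(∑ v, (z v % (N : ℤ)) • bvec v₀ v) + z := by
      push_cast
      congr 1
      congr 1
      exact Finset.sum_congr rfl fun v _ => by rw [hr v]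
    rw [hcoe]
    have hstep : -(∑ v, (z v % (N : ℤ)) • bvec v₀ v) + z
        = ∑ v, (z v - z v % (N : ℤ)) • bvec v₀ v := by
      conv_lhs =>
        arg 2
        rw [← zsub_decomp v₀ z hzz]
      rw [neg_add_eq_sub, ← Finset.sum_sub_distrib]
      exact Finset.sum_congr rfl fun v _ => (sub_smul (z v) (z v % (N : ℤ)) _).symm
    rw [hstep]
    apply AddSubgroup.sum_mem
    intro v _
    have hdm : z v - z v % (N : ℤ) = (z v / (N : ℤ)) * (N : ℤ) := by
      have := Int.mul_ediv_add_emod (z v) (N : ℤ)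
      linarith
    rw [hdm, mul_smul]
    exact AddSubgroup.zsmul_mem _ (hkill v) _
lemma balanced_set_finite (k : V → V → ℕ) (w : V → ℕ) (D : ℤ) :
    {d : V → ℤ | IsBalanced k w D d}.Finite := by
  classical
  apply Set.Finite.subset (Set.Finite.pi (fun v : V =>
    Set.finite_Icc (⌈mA k w D {v}⌉) (⌊(D : ℚ) - mA k w D ({v}ᶜ)⌋)))
  intro d hd
  rw [Set.mem_pi]
  intro v _
  rw [Set.mem_Icc]
  constructor
  · have h1 := hd.2 {v}
    have h2 : degA d {v} = d v := Finset.sum_singleton _ _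
    rw [h2] at h1
    exact Int.ceil_le.mpr h1
  · have h1 := hd.2 ({v}ᶜ)
    have h2 : degA d ({v}ᶜ) = D - d v := by
      have h3 : degA d {v} + degA d ({v}ᶜ) = D := by
        have h4 := hd.1
        unfold degA at h4 ⊢
        rw [Finset.sum_add_sum_compl {v} d]
        exact h4
      have h5 : degA d {v} = d v := Finset.sum_singleton _ _
      omega
    rw [h2] at h1
    apply Int.le_floor.mpr
    have : ((D - d v : ℤ) : ℚ) = (D : ℚ) - (d v : ℚ) := by push_cast; ring
    linarith [h1, this.ge, this.le]

theorem stmt4' (V : Type) [Fintype V] [DecidableEq V] (k : V → V → ℕ) (w : V → ℕ)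
    (hsym : ∀ u v, k u v = k v u) (hstab : IsStable k w) (hg : 2 ≤ genus k w)
    (D : ℤ) :
    {d : V → ℤ | IsBalanced k w D d}.Finite ∧
    {d : V → ℤ | IsStrictlyBalanced k w D d}.Finite ∧
    Finite (Quotient (degSetoid k D)) ∧
    Finite (↥(Zsub V) ⧸ (Lambda k).addSubgroupOf (Zsub V)) ∧
    Nat.card (Quotient (degSetoid k D)) =
      Nat.card (↥(Zsub V) ⧸ (Lambda k).addSubgroupOf (Zsub V)) ∧
    Nat.card {d : V → ℤ | IsStrictlyBalanced k w D d} ≤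
      Nat.card (Quotient (degSetoid k D)) ∧
    Nat.card (Quotient (degSetoid k D)) ≤
      Nat.card {d : V → ℤ | IsBalanced k w D d} := by
  have hconn := hstab.1
  have hne : Nonempty V := hconn.nonempty
  have hBfin : {d : V → ℤ | IsBalanced k w D d}.Finite := balanced_set_finite k w D
  have hSfin : {d : V → ℤ | IsStrictlyBalanced k w D d}.Finite :=
    hBfin.subset (fun d hd => hd.1)
  have hΔfin : Finite (↥(Zsub V) ⧸ (Lambda k).addSubgroupOf (Zsub V)) :=
    finite_degree_class_group k hsym hconn
  -- the translation bijection
  obtain ⟨v₀⟩ := hne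
  set d₀ : V → ℤ := fun u => if u = v₀ then D else 0 with hd₀def
  have hd₀sum : (∑ u, d₀ u) = D := by
    simp only [hd₀def]
    rw [Finset.sum_ite_eq' Finset.univ v₀ (fun _ => D)]
    simp
  have hZmem : ∀ p : {d : V → ℤ // (∑ v, d v) = D}, ((p : V → ℤ) - d₀) ∈ Zsub V := by
    intro p
    show ((p : V → ℤ) - d₀) ∈ (sumHom V).ker
    rw [AddMonoidHom.mem_ker]
    show (∑ v, ((p : V → ℤ) - d₀) v) = 0
    have : ∀ v, ((p : V → ℤ) - d₀) v = (p : V → ℤ) v - d₀ v := fun v => rfl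
    rw [Finset.sum_congr rfl fun v _ => this v, Finset.sum_sub_distrib, p.2, hd₀sum,
      sub_self]
  set H := (Lambda k).addSubgroupOf (Zsub V) with hHdef
  set Ffun : {d : V → ℤ // (∑ v, d v) = D} → (↥(Zsub V) ⧸ H) :=
    fun p => QuotientAddGroup.mk (⟨(p : V → ℤ) - d₀, hZmem p⟩ : Zsub V) with hFfun
  have hFresp : ∀ a b : {d : V → ℤ // (∑ v, d v) = D},
      (degSetoid k D).r a b → Ffun a = Ffun b := by
    intro a b hab
    have hab' : (a : V → ℤ) - b ∈ Lambda k := hab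
    simp only [hFfun]
    rw [QuotientAddGroup.eq]
    rw [AddSubgroup.mem_addSubgroupOf]
    have hcoe : ((-(⟨(a : V → ℤ) - d₀, hZmem a⟩ : Zsub V)
        + (⟨(b : V → ℤ) - d₀, hZmem b⟩ : Zsub V) : Zsub V) : V → ℤ)
        = -((a : V → ℤ) - d₀) + ((b : V → ℤ) - d₀) := by push_cast; ring
    rw [hcoe]
    have : -((a : V → ℤ) - d₀) + ((b : V → ℤ) - d₀) = -((a : V → ℤ) - b) := by ring
    rw [this]
    exact neg_mem hab'
  set F : Quotient (degSetoid k D) → (↥(Zsub V) ⧸ H) :=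
    fun q => Quotient.liftOn q Ffun hFresp with hF
  have hFinj : Function.Injective F := by
    intro p q
    induction p using Quotient.ind with
    | _ a =>
    induction q using Quotient.ind with
    | _ b =>
    intro hpq
    have h1 : Ffun a = Ffun b := hpq
    simp only [hFfun] at h1
    rw [QuotientAddGroup.eq] at h1
    rw [AddSubgroup.mem_addSubgroupOf] at h1
    have hcoe : ((-(⟨(a : V → ℤ) - d₀, hZmem a⟩ : Zsub V)
        + (⟨(b : V → ℤ) - d₀, hZmem b⟩ : Zsub V) : Zsub V) : V → ℤ)
        = -((a : V → ℤ) - d₀) + ((b : V → ℤ) - d₀) := by push_cast; ring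
    rw [hcoe] at h1
    have h2 : -((a : V → ℤ) - d₀) + ((b : V → ℤ) - d₀) = -((a : V → ℤ) - b) := by ring
    rw [h2] at h1
    have h3 : (a : V → ℤ) - b ∈ Lambda k := by
      have := neg_mem h1
      rwa [neg_neg] at this
    exact Quotient.sound h3
  have hFsurj : Function.Surjective F := by
    intro y
    induction y using QuotientAddGroup.induction_on with
    | H ζ =>
    obtain ⟨z, hz⟩ := ζ
    have hzsum : (∑ v, z v) = 0 := by
      have := hz
      rw [show Zsub V = (sumHom V).ker from rfl, AddMonoidHom.mem_ker] at this
      exact this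
    have hsum2 : (∑ v, (z + d₀) v) = D := by
      have : ∀ v, (z + d₀) v = z v + d₀ v := fun v => rfl
      rw [Finset.sum_congr rfl fun v _ => this v, Finset.sum_add_distrib, hzsum,
        hd₀sum, zero_add]
    refine ⟨Quotient.mk (degSetoid k D) ⟨z + d₀, hsum2⟩, ?_⟩
    show Ffun ⟨z + d₀, hsum2⟩ = _
    simp only [hFfun]
    have hval : ((⟨z + d₀, hsum2⟩ : {d : V → ℤ // (∑ v, d v) = D}) : V → ℤ) - d₀ = z := by
      show (z + d₀) - d₀ = z
      ring
    congr 1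
    exact Subtype.ext hval
  have hQfin : Finite (Quotient (degSetoid k D)) := Finite.of_injective F hFinj
  have hcardeq : Nat.card (Quotient (degSetoid k D))
      = Nat.card (↥(Zsub V) ⧸ H) :=
    Nat.card_congr (Equiv.ofBijective F ⟨hFinj, hFsurj⟩)
  -- strictly balanced ↪ classes
  have hle1 : Nat.card {d : V → ℤ | IsStrictlyBalanced k w D d} ≤
      Nat.card (Quotient (degSetoid k D)) := by
    have hΦinj : Function.Injective
        (fun s : {d : V → ℤ | IsStrictlyBalanced k w D d} =>
          Quotient.mk (degSetoid k D) ⟨(s : V → ℤ), s.2.1.1⟩) := by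
      intro s t hst
      have h1 := Quotient.exact hst
      have h2 : (s : V → ℤ) - t ∈ Lambda k := h1
      exact Subtype.ext (strictly_balanced_unique k w hsym hg D s.2 t.2 h2)
    exact Nat.card_le_card_of_injective _ hΦinj
  -- classes ↠ balanced
  have hle2 : Nat.card (Quotient (degSetoid k D)) ≤
      Nat.card {d : V → ℤ | IsBalanced k w D d} := by
    haveI := hBfin.to_subtype
    have hΨsurj : Function.Surjective
        (fun s : {d : V → ℤ | IsBalanced k w D d} =>
          Quotient.mk (degSetoid k D) ⟨(s : V → ℤ), s.2.1⟩) := by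
      intro q
      induction q using Quotient.ind with
      | _ p =>
      obtain ⟨z, hz⟩ := p
      obtain ⟨d, hdbal, hdmem⟩ := exists_balanced_in_class k w hsym hconn hg D z hz
      refine ⟨⟨d, hdbal⟩, ?_⟩
      exact Quotient.sound hdmem
    exact Nat.card_le_card_of_surjective _ hΨsurj
  exact ⟨hBfin, hSfin, hQfin, hΔfin, hcardeq, hle1, hle2⟩
/-- `B_d` and `B̄_d` are finite, `Δ^d` has the same finite
cardinality as the degree class group `Δ = Z/Λ`, and
`#B_d ≤ #Δ ≤ #B̄_d`. -/
theorem stmt4 (V : Type) [Fintype V] [DecidableEq V] (k : V → V → ℕ) (w : V → ℕ)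
    (hsym : ∀ u v, k u v = k v u) (hstab : IsStable k w) (hg : 2 ≤ genus k w)
    (D : ℤ) :
    {d : V → ℤ | IsBalanced k w D d}.Finite ∧
    {d : V → ℤ | IsStrictlyBalanced k w D d}.Finite ∧
    Finite (Quotient (degSetoid k D)) ∧
    Finite (↥(Zsub V) ⧸ (Lambda k).addSubgroupOf (Zsub V)) ∧
    Nat.card (Quotient (degSetoid k D)) =
      Nat.card (↥(Zsub V) ⧸ (Lambda k).addSubgroupOf (Zsub V)) ∧
    Nat.card {d : V → ℤ | IsStrictlyBalanced k w D d} ≤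
      Nat.card (Quotient (degSetoid k D)) ∧
    Nat.card (Quotient (degSetoid k D)) ≤
      Nat.card {d : V → ℤ | IsBalanced k w D d} := by
  exact stmt4' V k w hsym hstab hg D
end
end
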